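/- arXiv:2303.00058 — 6 statements merged into one kernel-verified Lean document; each statement's English description precedes it below -/
import Mathlib

section
/- Let A ∈ ℝ₊^{r×s} have full column rank, let x ∈ ℝ₊^r, and let T be the support (set of indices of strictly positive entries) of the unique nonnegative least squares solution q(A,x) = argmin_{s ≥ 0} ‖x − As‖₂. Then the restriction of q(A,x) to T equals (A_{:,T})† x, where A_{:,T} is the submatrix of columns of A indexed by T and † denotes the Moore–Penrose pseudoinverse, and q(A,x) is zero outside T. -/
open Matrix
/-- Moore–Penrose pseudoinverse of a full-column-rank real matrix. -/
noncomputable def pinv {m n : Type*} [Fintype m] [Fintype n] [DecidableEq n]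
    (A : Matrix m n ℝ) : Matrix n m ℝ := (Aᵀ * A)⁻¹ * Aᵀ

/-- `v` is the nonnegative least squares solution for `A`, `x`. -/
def IsNNLS {r s : ℕ} (A : Matrix (Fin r) (Fin s) ℝ) (x : Fin r → ℝ) (v : Fin s → ℝ) : Prop :=
  (∀ j, 0 ≤ v j) ∧
    ∀ w : Fin s → ℝ, (∀ j, 0 ≤ w j) →
      ∑ i, (x i - A.mulVec v i) ^ 2 ≤ ∑ i, (x i - A.mulVec w i) ^ 2

/-- on its support `T`, `q(A,x)` equals `(A_{:,T})† x`; off `T` it is zero. -/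
theorem nnls_support_formula {r s : ℕ} (hrs : s ≤ r) (A : Matrix (Fin r) (Fin s) ℝ)
    (hA0 : ∀ i j, 0 ≤ A i j) (hArank : A.rank = s)
    (x : Fin r → ℝ) (hx0 : ∀ i, 0 ≤ x i)
    (qv : Fin s → ℝ) (hq : IsNNLS A x qv)
    (T : Finset (Fin s)) (hT : T = Finset.univ.filter (fun j => 0 < qv j)) :
    (∀ j (hj : j ∈ T),
        qv j =
          (pinv (A.submatrix id (Subtype.val : {j // j ∈ T} → Fin s))).mulVec x ⟨j, hj⟩) ∧
      ∀ j, j ∉ T → qv j = 0 := by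
  obtain ⟨hq0, hqmin⟩ := hq
  have hoff : ∀ j, j ∉ T → qv j = 0 := by
    intro j hj
    rw [hT, Finset.mem_filter] at hj
    push_neg at hj
    exact le_antisymm (hj (Finset.mem_univ j)) (hq0 j)
  -- injectivity of mulVec from full column rank
  have hker : LinearMap.ker A.mulVecLin = ⊥ := by
    have h1 := LinearMap.finrank_range_add_finrank_ker A.mulVecLin
    rw [Matrix.rank] at hArank
    rw [hArank, Module.finrank_fintype_fun_eq_card, Fintype.card_fin] at h1
    have h2 : Module.finrank ℝ (LinearMap.ker A.mulVecLin) = 0 := by omega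
    exact Submodule.finrank_eq_zero.mp h2
  have hinj : Function.Injective A.mulVec := by
    have := LinearMap.ker_eq_bot.mp hker
    intro a b hab
    exact this (by simpa [Matrix.mulVecLin_apply] using hab)
  -- stationarity on the support
  have hstat : ∀ j : Fin s, 0 < qv j → ∑ i, A i j * (x i - A.mulVec qv i) = 0 := by
    intro j hj
    set c := ∑ i, A i j * (x i - A.mulVec qv i) with hc
    set n := ∑ i, (A i j) ^ 2 with hn
    have hcol : ∃ i, A i j ≠ 0 := by
      by_contra h
      push_neg at h
      have h0 : A.mulVec (Pi.single j 1) = A.mulVec 0 := by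
        rw [Matrix.mulVec_single, Matrix.mulVec_zero]
        ext i; simp [h i]
      have := congrFun (hinj h0) j
      simp at this
    obtain ⟨i0, hi0⟩ := hcol
    have hnpos : 0 < n := by
      refine Finset.sum_pos' (fun i _ => sq_nonneg _) ⟨i0, Finset.mem_univ _, ?_⟩
      positivity
    have key : ∀ t : ℝ, 0 ≤ qv j + t → 0 ≤ -2 * t * c + t ^ 2 * n := by
      intro t ht
      set w : Fin s → ℝ := fun k => qv k + t * (if k = j then 1 else 0) with hwdef
      have hw0 : ∀ k, 0 ≤ w k := by
        intro k
        by_cases hk : k = j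
        · subst hk; simpa [hwdef] using ht
        · simpa [hwdef, hk] using hq0 k
      have hwmv : ∀ i, A.mulVec w i = A.mulVec qv i + t * A i j := by
        intro i
        simp only [hwdef, Matrix.mulVec, dotProduct, mul_add, Finset.sum_add_distrib,
          mul_ite, mul_one, mul_zero, Finset.sum_ite_eq', Finset.mem_univ, if_true]
        ring
      have hsum : ∑ i, (x i - A.mulVec w i) ^ 2
          = ∑ i, ((x i - A.mulVec qv i) ^ 2
              + (-2 * t * (A i j * (x i - A.mulVec qv i)) + t ^ 2 * (A i j) ^ 2)) := by
        refine Finset.sum_congr rfl fun i _ => ?_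
        rw [hwmv i]; ring
      have hmin := hqmin w hw0
      rw [hsum, Finset.sum_add_distrib, Finset.sum_add_distrib, ← Finset.mul_sum,
        ← Finset.mul_sum, ← hc, ← hn] at hmin
      linarith
    rcases lt_trichotomy c 0 with h | h | h
    · have htneg : max (c / n) (-qv j) < 0 :=
        max_lt (div_neg_of_neg_of_pos h hnpos) (by linarith)
      have htn : c ≤ max (c / n) (-qv j) * n := by
        rw [← div_le_iff₀ hnpos]; exact le_max_left _ _
      have hkey := key (max (c / n) (-qv j))
        (by have := le_max_right (c / n) (-qv j); linarith)
      set t := max (c / n) (-qv j)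
      nlinarith [mul_pos (neg_pos.mpr htneg) (neg_pos.mpr h)]
    · exact h
    · have ht0 : 0 ≤ qv j + c / n := by positivity
      have hkey := key (c / n) ht0
      have heq : -2 * (c / n) * c + (c / n) ^ 2 * n = -(c ^ 2 / n) := by
        field_simp; ring
      rw [heq] at hkey
      have : 0 < c ^ 2 / n := by positivity
      linarith
  -- the submatrix and its Gram matrix
  set B := A.submatrix id (Subtype.val : {j // j ∈ T} → Fin s) with hBdef
  set u : {j // j ∈ T} → ℝ := fun j => qv j.1 with hudef
  have hext : ∀ v : {j // j ∈ T} → ℝ,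
      B.mulVec v = A.mulVec (fun k => if h : k ∈ T then v ⟨k, h⟩ else 0) := by
    intro v
    ext i
    simp only [Matrix.mulVec, dotProduct, hBdef, Matrix.submatrix_apply, id]
    symm
    rw [← Finset.sum_subset (Finset.subset_univ T) (fun k _ hk => by simp [hk])]
    rw [← Finset.sum_attach T (fun k => A i k * if h : k ∈ T then v ⟨k, h⟩ else 0)]
    rw [Finset.univ_eq_attach]
    exact Finset.sum_congr rfl fun k _ => by simp [k.2]
  have hBu : B.mulVec u = A.mulVec qv := by
    have hfun : (fun k => if h : k ∈ T then u ⟨k, h⟩ else 0) = qv := by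
      funext k
      by_cases hk : k ∈ T
      · simp [hk, hudef]
      · simp [hk, hoff k hk]
    rw [hext u, hfun]
  have hBinj : Function.Injective B.mulVec := by
    intro a b hab
    rw [hext a, hext b] at hab
    have := hinj hab
    funext k
    have := congrFun this k.1
    simpa [k.2] using this
  have hGram : IsUnit (Bᵀ * B) := by
    rw [← Matrix.mulVec_injective_iff_isUnit]
    intro a b hab
    have hzero : (Bᵀ * B).mulVec (a - b) = 0 := by
      rw [Matrix.mulVec_sub, hab, sub_self]
    have hdot : (a - b) ⬝ᵥ (Bᵀ * B).mulVec (a - b) = B.mulVec (a - b) ⬝ᵥ B.mulVec (a - b) := by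
      rw [← Matrix.mulVec_mulVec, Matrix.dotProduct_mulVec, Matrix.vecMul_transpose]
    rw [hzero, dotProduct_zero] at hdot
    have hB0 : B.mulVec (a - b) = 0 := dotProduct_self_eq_zero.mp hdot.symm
    have : a - b = 0 := hBinj (by rw [hB0, Matrix.mulVec_zero])
    exact sub_eq_zero.mp this
  -- normal equations
  have hnormal : (Bᵀ * B).mulVec u = Bᵀ.mulVec x := by
    have hBt : ∀ j : {j // j ∈ T}, Bᵀ.mulVec (x - A.mulVec qv) j = 0 := by
      rintro ⟨j1, hj1⟩
      have hjpos : 0 < qv j1 := by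
        rw [hT, Finset.mem_filter] at hj1
        exact hj1.2
      have := hstat j1 hjpos
      simpa [Matrix.mulVec, dotProduct, hBdef, Matrix.transpose_apply,
        Matrix.submatrix_apply, Pi.sub_apply] using this
    have hBt0 : Bᵀ.mulVec (x - A.mulVec qv) = 0 := funext hBt
    rw [Matrix.mulVec_sub, sub_eq_zero] at hBt0
    rw [← Matrix.mulVec_mulVec, hBu, hBt0]
  have hudet : u = (pinv B).mulVec x := by
    have hdet : IsUnit (Bᵀ * B).det := (Matrix.isUnit_iff_isUnit_det _).mp hGram
    have : (Bᵀ * B)⁻¹.mulVec ((Bᵀ * B).mulVec u) = (Bᵀ * B)⁻¹.mulVec (Bᵀ.mulVec x) := by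
      rw [hnormal]
    rw [Matrix.mulVec_mulVec, Matrix.nonsing_inv_mul _ hdet, Matrix.one_mulVec] at this
    rw [this, pinv, ← Matrix.mulVec_mulVec]
  refine ⟨fun j hj => ?_, hoff⟩
  have := congrFun hudet ⟨j, hj⟩
  simpa [hudef] using this
end

section
/- Let A ∈ ℝ₊^{r×s} have full column rank, x ∈ ℝ₊^r, and T = supp q(A,x) where q(A,x) = argmin_{s≥0} ‖x − As‖₂. Then the submatrix A_{:,T} also has full column rank, and q(A,x)_T is the unique global minimizer of w ↦ ‖x − A_{:,T} w‖₂ over all w ∈ ℝ^{|T|} (in particular the unconstrained least squares solution on the support is automatically nonnegative). -/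
/-- `A_{:,T}` has full column rank and `q(A,x)_T` is the unique global
minimizer of `w ↦ ‖x − A_{:,T} w‖` over all (not necessarily nonnegative) `w`. -/
theorem nnls_support_unconstrained {r s : ℕ} (hrs : s ≤ r) (A : Matrix (Fin r) (Fin s) ℝ)
    (hA0 : ∀ i j, 0 ≤ A i j) (hArank : A.rank = s)
    (x : Fin r → ℝ) (hx0 : ∀ i, 0 ≤ x i)
    (qv : Fin s → ℝ) (hq : IsNNLS A x qv)
    (T : Finset (Fin s)) (hT : T = Finset.univ.filter (fun j => 0 < qv j)) :
    (A.submatrix id (Subtype.val : {j // j ∈ T} → Fin s)).rank = T.card ∧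
      ∀ w : {j // j ∈ T} → ℝ, w ≠ (fun t => qv t.1) →
        ∑ i, (x i - (A.submatrix id (Subtype.val : {j // j ∈ T} → Fin s)).mulVec
            (fun t => qv t.1) i) ^ 2 <
          ∑ i, (x i - (A.submatrix id (Subtype.val : {j // j ∈ T} → Fin s)).mulVec w i) ^ 2 := by
  classical
  set B := A.submatrix id (Subtype.val : {j // j ∈ T} → Fin s) with hBdef
  -- A has injective mulVec
  have hAker : LinearMap.ker A.mulVecLin = ⊥ := by
    have h2 := A.mulVecLin.finrank_range_add_finrank_ker
    have hdom : Module.finrank ℝ (Fin s → ℝ) = s := by simp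
    have hr : Module.finrank ℝ (LinearMap.range A.mulVecLin) = s := hArank
    rw [hdom, hr] at h2
    have hk : Module.finrank ℝ (LinearMap.ker A.mulVecLin) = 0 := by omega
    exact Submodule.finrank_eq_zero.mp hk
  have hAinj : ∀ v : Fin s → ℝ, A.mulVec v = 0 → v = 0 := by
    intro v hv
    have : v ∈ LinearMap.ker A.mulVecLin := by
      simpa [LinearMap.mem_ker, Matrix.mulVecLin_apply] using hv
    simpa [hAker] using this
  -- extension of a vector on T by zero
  set ext : ({j // j ∈ T} → ℝ) → (Fin s → ℝ) :=
    fun w j => if h : j ∈ T then w ⟨j, h⟩ else 0 with hext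
  have hBA : ∀ (w : {j // j ∈ T} → ℝ), B.mulVec w = A.mulVec (ext w) := by
    intro w
    funext i
    have h1 : ∀ j ∈ Finset.univ, j ∉ T → A i j * ext w j = 0 := by
      intro j _ hj; simp [hext, hj]
    calc B.mulVec w i = ∑ t : {j // j ∈ T}, A i t.1 * w t := by
          simp [Matrix.mulVec, dotProduct, hBdef]
      _ = ∑ t : {j // j ∈ T}, A i t.1 * ext w t.1 := by
          apply Finset.sum_congr rfl; intro t _; simp [hext]
      _ = ∑ j ∈ T, A i j * ext w j := by
          rw [← Finset.sum_subtype T (fun j => Iff.rfl) (fun j => A i j * ext w j)]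
      _ = ∑ j, A i j * ext w j := Finset.sum_subset T.subset_univ h1
      _ = A.mulVec (ext w) i := by simp [Matrix.mulVec, dotProduct]
  -- B has injective mulVec
  have hBinj : ∀ w : {j // j ∈ T} → ℝ, B.mulVec w = 0 → w = 0 := by
    intro w hw
    rw [hBA] at hw
    have := hAinj _ hw
    funext t
    have := congrFun this t.1
    simpa [hext, t.2] using this
  -- qv vanishes off T, and ext of restriction is qv
  have hq0 : ∀ j, j ∉ T → qv j = 0 := by
    intro j hj
    rw [hT, Finset.mem_filter] at hj
    push_neg at hj
    exact le_antisymm (hj (Finset.mem_univ j)) (hq.1 j)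
  have hqe : ext (fun t => qv t.1) = qv := by
    funext j
    by_cases h : j ∈ T
    · simp [hext, h]
    · simp [hext, h, hq0 j h]
  have hBq : B.mulVec (fun t => qv t.1) = A.mulVec qv := by rw [hBA, hqe]
  -- first-order condition on the support
  have hfoc : ∀ j ∈ T, ∑ i, A i j * (x i - A.mulVec qv i) = 0 := by
    intro j hj
    rw [hT, Finset.mem_filter] at hj
    have hqj : 0 < qv j := hj.2
    set c := ∑ i, A i j * (x i - A.mulVec qv i) with hc
    by_contra hcne
    set a := ∑ i, (A i j) ^ 2 with ha
    have ha0 : 0 ≤ a := Finset.sum_nonneg fun i _ => sq_nonneg _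
    -- key inequality from optimality: ∀ t ≥ -qv j, 0 ≤ -2*t*c + t^2*a
    have key : ∀ t : ℝ, -qv j ≤ t → 0 ≤ -2*t*c + t^2*a := by
      intro t ht
      have hnn : ∀ k, 0 ≤ qv k + t * (Pi.single j 1 : Fin s → ℝ) k := by
        intro k
        by_cases hk : k = j
        · subst hk; simp only [Pi.single_eq_same, mul_one]; linarith
        · simp only [Pi.single_eq_of_ne hk, mul_zero, add_zero]; exact hq.1 k
      have h2 := hq.2 (fun k => qv k + t * (Pi.single j 1 : Fin s → ℝ) k) hnn
      have hmv : ∀ i, A.mulVec (fun k => qv k + t * (Pi.single j 1 : Fin s → ℝ) k) i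
          = A.mulVec qv i + t * A i j := by
        intro i
        have : (fun k => qv k + t * (Pi.single j 1 : Fin s → ℝ) k)
            = qv + t • (Pi.single j 1 : Fin s → ℝ) := by
          funext k; simp [Pi.smul_apply, smul_eq_mul]
        rw [this, Matrix.mulVec_add, Matrix.mulVec_smul]
        simp [Matrix.mulVec_single]
      have hexp : ∑ i, (x i - A.mulVec (fun k => qv k + t * (Pi.single j 1 : Fin s → ℝ) k) i) ^ 2
          = ∑ i, (x i - A.mulVec qv i) ^ 2 + (-2*t*c + t^2*a) := by
        calc ∑ i, (x i - A.mulVec (fun k => qv k + t * (Pi.single j 1 : Fin s → ℝ) k) i) ^ 2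
            = ∑ i, ((x i - A.mulVec qv i) ^ 2
                + ((-2*t) * (A i j * (x i - A.mulVec qv i)) + t^2 * (A i j)^2)) := by
              apply Finset.sum_congr rfl; intro i _; rw [hmv i]; ring
          _ = ∑ i, (x i - A.mulVec qv i) ^ 2
                + ((-2*t) * ∑ i, A i j * (x i - A.mulVec qv i) + t^2 * ∑ i, (A i j)^2) := by
              rw [Finset.sum_add_distrib, Finset.sum_add_distrib, Finset.mul_sum, Finset.mul_sum]
          _ = ∑ i, (x i - A.mulVec qv i) ^ 2 + (-2*t*c + t^2*a) := by
              rw [← hc, ← ha]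
      rw [hexp] at h2
      linarith
    -- derive contradiction
    have hcabs : 0 < |c| := abs_pos.mpr hcne
    set δ := min (qv j / |c|) (1 / (a + 1)) with hδ
    have hδpos : 0 < δ := lt_min (div_pos hqj hcabs) (by positivity)
    set t := c * δ with htdef
    have htabs : |t| ≤ qv j := by
      rw [htdef, abs_mul, abs_of_pos hδpos]
      calc |c| * δ ≤ |c| * (qv j / |c|) := by
            apply mul_le_mul_of_nonneg_left (min_le_left _ _) (le_of_lt hcabs)
        _ = qv j := by field_simp
    have ht : -qv j ≤ t := by
      have := neg_abs_le t
      linarith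
    have hk := key t ht
    have htc : t * c = c^2 * δ := by rw [htdef]; ring
    have ht2 : t^2 * a = c^2 * δ * (δ * a) := by rw [htdef]; ring
    have hδa : δ * a < 2 := by
      have h1 : δ ≤ 1 / (a + 1) := min_le_right _ _
      have h2 : δ * a ≤ (1 / (a + 1)) * a := mul_le_mul_of_nonneg_right h1 ha0
      have h3 : (1 / (a + 1)) * a < 1 := by
        rw [div_mul_eq_mul_div, one_mul, div_lt_one (by linarith)]; linarith
      linarith
    have hcd : 0 < c^2 * δ := by positivity
    nlinarith
  -- orthogonality: for all d on T, ⟨B d, resid⟩ = 0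
  have hBrow : ∀ (d : {j // j ∈ T} → ℝ) i, B.mulVec d i = ∑ t : {j // j ∈ T}, A i t.1 * d t := by
    intro d i; simp [Matrix.mulVec, dotProduct, hBdef]
  have horth : ∀ d : {j // j ∈ T} → ℝ, ∑ i, B.mulVec d i * (x i - A.mulVec qv i) = 0 := by
    intro d
    calc ∑ i, B.mulVec d i * (x i - A.mulVec qv i)
        = ∑ i, ∑ t : {j // j ∈ T}, d t * (A i t.1 * (x i - A.mulVec qv i)) := by
          apply Finset.sum_congr rfl; intro i _
          rw [hBrow d i, Finset.sum_mul]
          apply Finset.sum_congr rfl; intro t _; ring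
      _ = ∑ t : {j // j ∈ T}, ∑ i, d t * (A i t.1 * (x i - A.mulVec qv i)) := Finset.sum_comm
      _ = ∑ t : {j // j ∈ T}, d t * ∑ i, A i t.1 * (x i - A.mulVec qv i) := by
          apply Finset.sum_congr rfl; intro t _; rw [Finset.mul_sum]
      _ = 0 := by
          apply Finset.sum_eq_zero; intro t _; rw [hfoc t.1 t.2, mul_zero]
  -- decomposition of the objective
  have hdecomp : ∀ w : {j // j ∈ T} → ℝ,
      ∑ i, (x i - B.mulVec w i) ^ 2
        = ∑ i, (x i - B.mulVec (fun t => qv t.1) i) ^ 2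
          + ∑ i, (B.mulVec (w - fun t => qv t.1) i) ^ 2 := by
    intro w
    set d : {j // j ∈ T} → ℝ := w - fun t => qv t.1 with hd
    have hw : w = (fun t => qv t.1) + d := by funext t; simp [hd]
    have h1 : ∀ i, x i - B.mulVec w i = (x i - A.mulVec qv i) - B.mulVec d i := by
      intro i
      rw [hw, Matrix.mulVec_add, ← hBq]
      simp [Pi.add_apply]; ring
    have h2 : ∀ i, x i - B.mulVec (fun t => qv t.1) i = x i - A.mulVec qv i := by
      intro i; rw [hBq]
    calc ∑ i, (x i - B.mulVec w i) ^ 2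
        = ∑ i, ((x i - A.mulVec qv i) ^ 2 + ((B.mulVec d i) ^ 2
            - 2 * (B.mulVec d i * (x i - A.mulVec qv i)))) := by
          apply Finset.sum_congr rfl; intro i _; rw [h1 i]; ring
      _ = ∑ i, (x i - A.mulVec qv i) ^ 2 + (∑ i, (B.mulVec d i) ^ 2
            - 2 * ∑ i, B.mulVec d i * (x i - A.mulVec qv i)) := by
          rw [Finset.sum_add_distrib, Finset.sum_sub_distrib, Finset.mul_sum]
      _ = ∑ i, (x i - B.mulVec (fun t => qv t.1) i) ^ 2 + ∑ i, (B.mulVec d i) ^ 2 := by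
          rw [horth d]
          simp only [h2]
          ring
  constructor
  · -- rank statement
    have hkerB : LinearMap.ker B.mulVecLin = ⊥ := by
      rw [LinearMap.ker_eq_bot']
      intro w hw
      exact hBinj w (by simpa [Matrix.mulVecLin_apply] using hw)
    have hinjB : Function.Injective B.mulVecLin := LinearMap.ker_eq_bot.mp hkerB
    rw [show B.rank = Module.finrank ℝ (LinearMap.range B.mulVecLin) from rfl,
      LinearMap.finrank_range_of_inj hinjB]
    simp [Fintype.card_coe]
  · -- strict minimality
    intro w hw
    have hdne : (w - fun t => qv t.1) ≠ 0 := sub_ne_zero.mpr hw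
    have hBdne : B.mulVec (w - fun t => qv t.1) ≠ 0 := by
      intro h; exact hdne (hBinj _ h)
    have hpos : 0 < ∑ i, (B.mulVec (w - fun t => qv t.1) i) ^ 2 := by
      rcases Function.ne_iff.mp hBdne with ⟨i, hi⟩
      apply Finset.sum_pos' (fun i _ => sq_nonneg _)
      exact ⟨i, Finset.mem_univ i, lt_of_le_of_ne (sq_nonneg _) (Ne.symm (pow_ne_zero 2 hi))⟩
    have := hdecomp w
    linarith [this]
end

section
/- The nonnegative least squares map q is continuous on the set of pairs (A, x) where A ∈ ℝ₊^{r×s} (r ≥ s) has full column rank and x ∈ ℝ₊^r; that is, if (Aᵏ, xᵏ) → (A, x) with all Aᵏ and A of full column rank and all entries nonnegative, then q(Aᵏ, xᵏ) → q(A, x). -/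
open Matrix Filter Topology Bornology

lemma inj_of_rank {r s : ℕ} (A : Matrix (Fin r) (Fin s) ℝ) (h : A.rank = s) :
    Function.Injective A.mulVec := by
  have h1 := LinearMap.finrank_range_add_finrank_ker A.mulVecLin
  rw [Matrix.rank] at h
  rw [h, Module.finrank_pi] at h1
  simp only [Fintype.card_fin] at h1
  have hk : Module.finrank ℝ (LinearMap.ker A.mulVecLin) = 0 := by omega
  have := Submodule.finrank_eq_zero.mp hk
  have hinj : Function.Injective A.mulVecLin := LinearMap.ker_eq_bot.mp this
  intro a b hab
  exact hinj (by simpa [Matrix.mulVecLin_apply] using hab)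

lemma antilip {r s : ℕ} (A : Matrix (Fin r) (Fin s) ℝ) (h : Function.Injective A.mulVec) :
    ∃ K : ℝ, 0 < K ∧ ∀ w : Fin s → ℝ, ‖w‖ ≤ K * ‖A.mulVec w‖ := by
  have hker : LinearMap.ker A.mulVecLin = ⊥ := by
    rw [LinearMap.ker_eq_bot]
    intro a b hab
    exact h (by simpa [Matrix.mulVecLin_apply] using hab)
  obtain ⟨K, hK, hAL⟩ := A.mulVecLin.exists_antilipschitzWith hker
  refine ⟨K, hK, fun w => ?_⟩
  have := hAL.le_mul_dist w 0
  simpa [Matrix.mulVecLin_apply, dist_eq_norm] using this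

lemma norm_le_sqrt_sum {n : ℕ} (u : Fin n → ℝ) : ‖u‖ ≤ Real.sqrt (∑ i, u i ^ 2) := by
  apply pi_norm_le_iff_of_nonneg (Real.sqrt_nonneg _) |>.mpr
  intro i
  rw [Real.norm_eq_abs, ← Real.sqrt_sq_eq_abs]
  exact Real.sqrt_le_sqrt (Finset.single_le_sum (fun j _ => sq_nonneg (u j)) (Finset.mem_univ i))

lemma sum_sq_le {n : ℕ} (u : Fin n → ℝ) : ∑ i, u i ^ 2 ≤ n * ‖u‖ ^ 2 := by
  calc ∑ i, u i ^ 2 ≤ ∑ _i : Fin n, ‖u‖ ^ 2 := by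
        apply Finset.sum_le_sum
        intro i _
        have h := norm_le_pi_norm u i
        calc u i ^ 2 = ‖u i‖ ^ 2 := by rw [Real.norm_eq_abs, sq_abs]
        _ ≤ ‖u‖ ^ 2 := by
          apply pow_le_pow_left₀ (norm_nonneg _) h
    _ = n * ‖u‖ ^ 2 := by simp [Finset.sum_const, nsmul_eq_mul]

lemma mulVec_norm_le {r s : ℕ} (A : Fin r → Fin s → ℝ) (w : Fin s → ℝ) :
    ‖(Matrix.of A).mulVec w‖ ≤ s * ‖A‖ * ‖w‖ := by
  apply pi_norm_le_iff_of_nonneg (by positivity) |>.mpr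
  intro i
  rw [Matrix.mulVec, dotProduct]
  calc ‖∑ j, Matrix.of A i j * w j‖ ≤ ∑ j, ‖Matrix.of A i j * w j‖ := norm_sum_le _ _
    _ ≤ ∑ _j : Fin s, ‖A‖ * ‖w‖ := by
        apply Finset.sum_le_sum
        intro j _
        rw [norm_mul]
        have h1 : ‖Matrix.of A i j‖ ≤ ‖A‖ :=
          le_trans (norm_le_pi_norm (A i) j) (norm_le_pi_norm A i)
        exact mul_le_mul h1 (norm_le_pi_norm w j) (norm_nonneg _) (norm_nonneg _)
    _ = s * ‖A‖ * ‖w‖ := by simp [Finset.sum_const, nsmul_eq_mul]; ring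

lemma nnls_unique {r s : ℕ} {A : Matrix (Fin r) (Fin s) ℝ} (hA : Function.Injective A.mulVec)
    {x : Fin r → ℝ} {v w : Fin s → ℝ} (hv : IsNNLS A x v) (hw : IsNNLS A x w) : v = w := by
  set m : Fin s → ℝ := fun j => (v j + w j) / 2 with hm
  have hmnn : ∀ j, 0 ≤ m j := fun j => by
    have := hv.1 j; have := hw.1 j; simp [hm]; linarith
  have hAm : ∀ i, A.mulVec m i = (A.mulVec v i + A.mulVec w i) / 2 := by
    intro i
    have : m = (2⁻¹ : ℝ) • (v + w) := by
      funext j; simp [hm]; ring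
    rw [this, Matrix.mulVec_smul, Matrix.mulVec_add]
    simp [Pi.smul_apply]; ring
  have key : ∑ i, (x i - A.mulVec m i) ^ 2
      = (∑ i, (x i - A.mulVec v i) ^ 2) / 2 + (∑ i, (x i - A.mulVec w i) ^ 2) / 2
        - (∑ i, (A.mulVec v i - A.mulVec w i) ^ 2) / 4 := by
    rw [Finset.sum_div, Finset.sum_div, Finset.sum_div, ← Finset.sum_add_distrib,
      ← Finset.sum_sub_distrib]
    apply Finset.sum_congr rfl
    intro i _
    rw [hAm i]; ring
  have h1 := hv.2 m hmnn
  have h2 := hw.2 m hmnn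
  have h3 : ∑ i, (A.mulVec v i - A.mulVec w i) ^ 2 ≤ 0 := by linarith
  have h4 : ∀ i, A.mulVec v i - A.mulVec w i = 0 := by
    intro i
    have := Finset.sum_eq_zero_iff_of_nonneg (fun i _ => sq_nonneg (A.mulVec v i - A.mulVec w i))
      |>.mp (le_antisymm h3 (Finset.sum_nonneg fun i _ => sq_nonneg _)) i (Finset.mem_univ i)
    exact pow_eq_zero_iff (by norm_num) |>.mp this
  apply hA
  funext i
  have := h4 i; linarith

lemma obj_tendsto {r s : ℕ} {Ak : ℕ → Fin r → Fin s → ℝ} {A : Fin r → Fin s → ℝ}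
    {xk : ℕ → Fin r → ℝ} {x : Fin r → ℝ} {uk : ℕ → Fin s → ℝ} {u : Fin s → ℝ}
    (hA : Tendsto Ak atTop (𝓝 A)) (hx : Tendsto xk atTop (𝓝 x))
    (hu : Tendsto uk atTop (𝓝 u)) :
    Tendsto (fun k => ∑ i, (xk k i - (Matrix.of (Ak k)).mulVec (uk k) i) ^ 2) atTop
      (𝓝 (∑ i, (x i - (Matrix.of A).mulVec u i) ^ 2)) := by
  have hA' : ∀ i j, Tendsto (fun k => Ak k i j) atTop (𝓝 (A i j)) := fun i j =>
    tendsto_pi_nhds.mp (tendsto_pi_nhds.mp hA i) j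
  have hx' : ∀ i, Tendsto (fun k => xk k i) atTop (𝓝 (x i)) := tendsto_pi_nhds.mp hx
  have hu' : ∀ j, Tendsto (fun k => uk k j) atTop (𝓝 (u j)) := tendsto_pi_nhds.mp hu
  simp only [Matrix.mulVec, dotProduct, Matrix.of_apply]
  exact tendsto_finset_sum _ fun i _ =>
    ((hx' i).sub (tendsto_finset_sum _ fun j _ => (hA' i j).mul (hu' j))).pow 2

lemma seq_main {r s : ℕ}
    {A : Fin r → Fin s → ℝ} {x : Fin r → ℝ}
    (hA : (Matrix.of A).rank = s)
    {Ak : ℕ → Fin r → Fin s → ℝ} {xk : ℕ → Fin r → ℝ}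
    {vk : ℕ → Fin s → ℝ} {v : Fin s → ℝ}
    (hAk : Tendsto Ak atTop (𝓝 A)) (hxk : Tendsto xk atTop (𝓝 x))
    (hvk : ∀ᶠ k in atTop, IsNNLS (Matrix.of (Ak k)) (xk k) (vk k))
    (hv : IsNNLS (Matrix.of A) x v) :
    Tendsto vk atTop (𝓝 v) := by
  have hinj : Function.Injective (Matrix.of A).mulVec := inj_of_rank _ hA
  obtain ⟨K, hK, hKle⟩ := antilip _ hinj
  set C : ℝ := (1 + Real.sqrt r) * (‖x‖ + 1) with hC
  have hC0 : 0 < C := by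
    apply mul_pos
    · have := Real.sqrt_nonneg (r : ℝ); linarith
    · have := norm_nonneg x; linarith
  set B : ℝ := 2 * K * C with hB
  set ε : ℝ := 1 / (2 * K * (s + 1)) with hε
  have hε0 : 0 < ε := by positivity
  -- eventual bounds
  have hxb : ∀ᶠ k in atTop, ‖xk k‖ ≤ ‖x‖ + 1 :=
    hxk.norm.eventually (eventually_le_nhds (lt_add_one _))
  have hclose : ∀ᶠ k in atTop, ‖Ak k - A‖ ≤ ε := by
    have h0 : Tendsto (fun k => ‖Ak k - A‖) atTop (𝓝 0) :=
      tendsto_iff_norm_sub_tendsto_zero.mp hAk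
    exact h0.eventually (eventually_le_nhds hε0)
  have hbound : ∀ᶠ k in atTop, ‖vk k‖ ≤ B := by
    filter_upwards [hvk, hxb, hclose] with k hk hxk' hck
    -- objective at vk ≤ objective at 0
    have h0 : ∑ i, (xk k i - (Matrix.of (Ak k)).mulVec (vk k) i) ^ 2
        ≤ ∑ i, (xk k i) ^ 2 := by
      have := hk.2 0 (fun j => le_refl 0)
      simpa [Matrix.mulVec_zero] using this
    have h1 : ‖(Matrix.of (Ak k)).mulVec (vk k)‖ ≤ C := by
      have e1 : ‖(Matrix.of (Ak k)).mulVec (vk k)‖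
          ≤ ‖xk k‖ + ‖xk k - (Matrix.of (Ak k)).mulVec (vk k)‖ := by
        have := norm_sub_le (xk k) (xk k - (Matrix.of (Ak k)).mulVec (vk k))
        simpa using this
      have e2 : ‖xk k - (Matrix.of (Ak k)).mulVec (vk k)‖
          ≤ Real.sqrt (∑ i, (xk k i - (Matrix.of (Ak k)).mulVec (vk k) i) ^ 2) := by
        have := norm_le_sqrt_sum (xk k - (Matrix.of (Ak k)).mulVec (vk k))
        simpa [Pi.sub_apply] using this
      have e3 : Real.sqrt (∑ i, (xk k i - (Matrix.of (Ak k)).mulVec (vk k) i) ^ 2)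
          ≤ Real.sqrt (∑ i, (xk k i) ^ 2) := Real.sqrt_le_sqrt h0
      have e4 : Real.sqrt (∑ i, (xk k i) ^ 2) ≤ Real.sqrt r * ‖xk k‖ := by
        have := sum_sq_le (xk k)
        calc Real.sqrt (∑ i, (xk k i) ^ 2) ≤ Real.sqrt ((r : ℝ) * ‖xk k‖ ^ 2) :=
              Real.sqrt_le_sqrt this
          _ = Real.sqrt r * ‖xk k‖ := by
              rw [Real.sqrt_mul (Nat.cast_nonneg r), Real.sqrt_sq (norm_nonneg _)]
      have hx0 : 0 ≤ ‖xk k‖ := norm_nonneg _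
      have hs0 : 0 ≤ Real.sqrt (r : ℝ) := Real.sqrt_nonneg _
      calc ‖(Matrix.of (Ak k)).mulVec (vk k)‖ ≤ ‖xk k‖ + Real.sqrt r * ‖xk k‖ := by
            linarith
        _ = (1 + Real.sqrt r) * ‖xk k‖ := by ring
        _ ≤ (1 + Real.sqrt r) * (‖x‖ + 1) := by
            apply mul_le_mul_of_nonneg_left hxk'
            linarith
    -- compare A.mulVec and Ak.mulVec
    have h2 : ‖(Matrix.of A).mulVec (vk k) - (Matrix.of (Ak k)).mulVec (vk k)‖
        ≤ s * ε * ‖vk k‖ := by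
      have e1 : (Matrix.of A).mulVec (vk k) - (Matrix.of (Ak k)).mulVec (vk k)
          = (Matrix.of (A - Ak k)).mulVec (vk k) := by
        rw [← Matrix.sub_mulVec]; rfl
      rw [e1]
      calc ‖(Matrix.of (A - Ak k)).mulVec (vk k)‖ ≤ s * ‖A - Ak k‖ * ‖vk k‖ :=
            mulVec_norm_le _ _
        _ ≤ s * ε * ‖vk k‖ := by
            apply mul_le_mul_of_nonneg_right _ (norm_nonneg _)
            apply mul_le_mul_of_nonneg_left _ (Nat.cast_nonneg s)
            rw [norm_sub_rev]; exact hck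
    have h3 : ‖vk k‖ ≤ K * ‖(Matrix.of A).mulVec (vk k)‖ := hKle _
    have h4 : ‖(Matrix.of A).mulVec (vk k)‖
        ≤ ‖(Matrix.of (Ak k)).mulVec (vk k)‖ + s * ε * ‖vk k‖ := by
      have := norm_sub_norm_le ((Matrix.of A).mulVec (vk k))
        ((Matrix.of (Ak k)).mulVec (vk k))
      linarith [h2, this]
    have h5 : K * (s * ε) ≤ 1 / 2 := by
      rw [hε]
      have heq : K * ((s : ℝ) * (1 / (2 * K * (s + 1)))) = (s : ℝ) / (2 * (s + 1)) := by
        field_simp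
      rw [heq, div_le_div_iff₀ (by positivity) (by norm_num)]
      have hs : (0 : ℝ) ≤ s := Nat.cast_nonneg s
      linarith
    have h6 : ‖vk k‖ ≤ K * C + (1 / 2) * ‖vk k‖ := by
      have hv0 : 0 ≤ ‖vk k‖ := norm_nonneg _
      calc ‖vk k‖ ≤ K * (‖(Matrix.of (Ak k)).mulVec (vk k)‖ + s * ε * ‖vk k‖) := by
            refine h3.trans ?_
            exact mul_le_mul_of_nonneg_left h4 (le_of_lt hK)
        _ = K * ‖(Matrix.of (Ak k)).mulVec (vk k)‖ + (K * (s * ε)) * ‖vk k‖ := by ring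
        _ ≤ K * C + (1 / 2) * ‖vk k‖ := by
            have := mul_le_mul_of_nonneg_left h1 (le_of_lt hK)
            have := mul_le_mul_of_nonneg_right h5 hv0
            linarith
    rw [hB]; linarith
  -- subsequence argument
  apply tendsto_of_subseq_tendsto
  intro ns hns
  have hP : ∀ᶠ k in atTop, ‖vk k‖ ≤ B ∧ IsNNLS (Matrix.of (Ak k)) (xk k) (vk k) :=
    hbound.and hvk
  obtain ⟨N, hN⟩ := eventually_atTop.mp (hns.eventually hP)
  have hw : ∀ n : ℕ, vk (ns (n + N)) ∈ Metric.closedBall (0 : Fin s → ℝ) B := by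
    intro n
    rw [Metric.mem_closedBall, dist_zero_right]
    exact (hN (n + N) (Nat.le_add_left N n)).1
  obtain ⟨b, _, φ, hφ, hbφ⟩ := tendsto_subseq_of_bounded Metric.isBounded_closedBall hw
  have hbφ' : Tendsto (fun n => vk (ns (φ n + N))) atTop (𝓝 b) := hbφ
  have hadd : Tendsto (fun n => φ n + N) atTop atTop :=
    tendsto_atTop_atTop.mpr fun b =>
      ⟨b, fun n hn => le_trans (hn.trans hφ.le_apply) (Nat.le_add_right _ _)⟩
  have hidx : Tendsto (fun n => ns (φ n + N)) atTop atTop := hns.comp hadd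
  have hAidx : Tendsto (fun n => Ak (ns (φ n + N))) atTop (𝓝 A) := hAk.comp hidx
  have hxidx : Tendsto (fun n => xk (ns (φ n + N))) atTop (𝓝 x) := hxk.comp hidx
  have hIs : ∀ n, IsNNLS (Matrix.of (Ak (ns (φ n + N)))) (xk (ns (φ n + N)))
      (vk (ns (φ n + N))) := fun n => (hN (φ n + N) (Nat.le_add_left N (φ n))).2
  have hb : IsNNLS (Matrix.of A) x b := by
    constructor
    · intro j
      have hcoord : Tendsto (fun n => vk (ns (φ n + N)) j) atTop (𝓝 (b j)) :=
        tendsto_pi_nhds.mp hbφ' j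
      exact ge_of_tendsto' hcoord fun n => (hIs n).1 j
    · intro u hu
      have hle : ∀ n, ∑ i, (xk (ns (φ n + N)) i
            - (Matrix.of (Ak (ns (φ n + N)))).mulVec (vk (ns (φ n + N))) i) ^ 2
          ≤ ∑ i, (xk (ns (φ n + N)) i
            - (Matrix.of (Ak (ns (φ n + N)))).mulVec u i) ^ 2 :=
        fun n => (hIs n).2 u hu
      exact le_of_tendsto_of_tendsto' (obj_tendsto hAidx hxidx hbφ')
        (obj_tendsto hAidx hxidx tendsto_const_nhds) hle
  have hbv : b = v := nnls_unique hinj hb hv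
  exact ⟨fun n => φ n + N, by rw [← hbv]; exact hbφ'⟩

/-- the nonnegative least squares map `q` is continuous on the set of
pairs `(A, x)` with `A` nonnegative of full column rank and `x` nonnegative. -/
theorem nnls_continuousOn {r s : ℕ} (hrs : s ≤ r)
    (Q : (Fin r → Fin s → ℝ) → (Fin r → ℝ) → (Fin s → ℝ))
    (hQ : ∀ A x, (∀ i j, 0 ≤ A i j) → (∀ i, 0 ≤ x i) → (Matrix.of A).rank = s →
      IsNNLS (Matrix.of A) x (Q A x)) :
    ContinuousOn (fun p : (Fin r → Fin s → ℝ) × (Fin r → ℝ) => Q p.1 p.2)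
      {p | (∀ i j, 0 ≤ p.1 i j) ∧ (∀ i, 0 ≤ p.2 i) ∧ (Matrix.of p.1).rank = s} := by
  intro p hp
  have hv : IsNNLS (Matrix.of p.1) p.2 (Q p.1 p.2) := hQ p.1 p.2 hp.1 hp.2.1 hp.2.2
  rw [ContinuousWithinAt]
  apply Filter.tendsto_iff_seq_tendsto.mpr
  intro pk hpk
  have hmem : ∀ᶠ k in atTop, pk k ∈
      {p : (Fin r → Fin s → ℝ) × (Fin r → ℝ) |
        (∀ i j, 0 ≤ p.1 i j) ∧ (∀ i, 0 ≤ p.2 i) ∧ (Matrix.of p.1).rank = s} :=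
    hpk.eventually_mem self_mem_nhdsWithin
  have htend : Tendsto pk atTop (𝓝 p) := hpk.mono_right nhdsWithin_le_nhds
  have hAk : Tendsto (fun k => (pk k).1) atTop (𝓝 p.1) :=
    (continuous_fst.tendsto p).comp htend
  have hxk : Tendsto (fun k => (pk k).2) atTop (𝓝 p.2) :=
    (continuous_snd.tendsto p).comp htend
  have hvk : ∀ᶠ k in atTop, IsNNLS (Matrix.of ((pk k).1)) ((pk k).2) (Q (pk k).1 (pk k).2) := by
    filter_upwards [hmem] with k hk
    exact hQ _ _ hk.1 hk.2.1 hk.2.2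
  exact seq_main hp.2.2 hAk hxk hvk hv
end

section
/- The complement of U_{r,s} in ℝ₊^{r×s} × ℝ₊^r has Lebesgue measure zero; consequently U_{r,s} is dense and of full measure. -/
open Matrix MeasureTheory

namespace NNLSAux

variable {r s : ℕ}

noncomputable def F (A : Matrix (Fin r) (Fin s) ℝ) (x : Fin r → ℝ) (v : Fin s → ℝ) : ℝ :=
  ∑ i, (x i - A.mulVec v i) ^ 2

noncomputable def lam (A : Matrix (Fin r) (Fin s) ℝ) (x : Fin r → ℝ) (v : Fin s → ℝ) :
    Fin s → ℝ := Aᵀ.mulVec (x - A.mulVec v)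

lemma mulVec_apply (A : Matrix (Fin r) (Fin s) ℝ) (v : Fin s → ℝ) (i : Fin r) :
    A.mulVec v i = ∑ j, A i j * v j := rfl

lemma lam_apply (A : Matrix (Fin r) (Fin s) ℝ) (x : Fin r → ℝ) (v : Fin s → ℝ) (j : Fin s) :
    lam A x v j = ∑ i, A i j * (x i - A.mulVec v i) := by
  simp [lam, Matrix.mulVec, dotProduct, Matrix.transpose_apply]

lemma expand (A : Matrix (Fin r) (Fin s) ℝ) (x : Fin r → ℝ) (u w : Fin s → ℝ) :
    F A x u = F A x w + 2 * ∑ j, lam A x w j * (w j - u j)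
      + ∑ i, (A.mulVec w i - A.mulVec u i) ^ 2 := by
  have hsub : ∀ i, A.mulVec w i - A.mulVec u i = ∑ j, A i j * (w j - u j) := by
    intro i
    simp only [mulVec_apply, ← Finset.sum_sub_distrib, mul_sub]
  have hmid : ∑ j, lam A x w j * (w j - u j)
      = ∑ i, (x i - A.mulVec w i) * (A.mulVec w i - A.mulVec u i) := by
    simp only [lam_apply, Finset.sum_mul, hsub, Finset.mul_sum]
    rw [Finset.sum_comm]
    congr 1; ext i; congr 1; ext j; ring
  have hpt : ∀ i, (x i - A.mulVec u i) ^ 2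
      = (x i - A.mulVec w i) ^ 2
        + 2 * ((x i - A.mulVec w i) * (A.mulVec w i - A.mulVec u i))
        + (A.mulVec w i - A.mulVec u i) ^ 2 := by
    intro i; ring
  calc F A x u = ∑ i, ((x i - A.mulVec w i) ^ 2
        + 2 * ((x i - A.mulVec w i) * (A.mulVec w i - A.mulVec u i))
        + (A.mulVec w i - A.mulVec u i) ^ 2) := Finset.sum_congr rfl fun i _ => hpt i
    _ = _ := by
        rw [Finset.sum_add_distrib, Finset.sum_add_distrib, ← Finset.mul_sum, hmid]
        rfl

lemma kkt {A : Matrix (Fin r) (Fin s) ℝ} {x : Fin r → ℝ} {v : Fin s → ℝ}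
    (h : IsNNLS A x v) (j : Fin s) :
    lam A x v j ≤ 0 ∧ (0 < v j → lam A x v j = 0) := by
  set d : ℝ := ∑ i, (A i j) ^ 2 with hd_def
  have hd : 0 ≤ d := Finset.sum_nonneg fun i _ => sq_nonneg _
  have key : ∀ t : ℝ, -v j ≤ t → 0 ≤ -2 * t * lam A x v j + t ^ 2 * d := by
    intro t ht
    set u : Fin s → ℝ := Function.update v j (v j + t) with hu_def
    have hu : ∀ k, 0 ≤ u k := by
      intro k
      rcases eq_or_ne k j with rfl | hk
      · simp only [hu_def, Function.update_self]; linarith [h.1 k]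
      · simp only [hu_def, Function.update_of_ne hk]; exact h.1 k
    have h2 : F A x v ≤ F A x u := h.2 u hu
    have he := expand A x u v
    have hvu : ∀ k, v k - u k = if k = j then -t else 0 := by
      intro k
      rcases eq_or_ne k j with rfl | hk
      · simp [hu_def]
      · simp [hu_def, Function.update_of_ne hk, hk]
    have hmid : ∑ k, lam A x v k * (v k - u k) = -t * lam A x v j := by
      rw [Finset.sum_eq_single j]
      · rw [hvu j, if_pos rfl]; ring
      · intro k _ hk; rw [hvu k, if_neg hk, mul_zero]
      · intro hj; exact absurd (Finset.mem_univ j) hj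
    have hsq : ∑ i, (A.mulVec v i - A.mulVec u i) ^ 2 = t ^ 2 * d := by
      rw [hd_def, Finset.mul_sum]
      refine Finset.sum_congr rfl fun i _ => ?_
      have : A.mulVec v i - A.mulVec u i = ∑ k, A i k * (v k - u k) := by
        simp only [mulVec_apply, ← Finset.sum_sub_distrib, mul_sub]
      rw [this]
      rw [Finset.sum_eq_single j]
      · rw [hvu j, if_pos rfl]; ring
      · intro k _ hk; rw [hvu k, if_neg hk, mul_zero]
      · intro hj; exact absurd (Finset.mem_univ j) hj
    rw [hmid, hsq] at he
    nlinarith [he, h2]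
  constructor
  · by_contra hpos
    push_neg at hpos
    set t : ℝ := lam A x v j / (d + 1) with ht_def
    have htpos : 0 < t := div_pos hpos (by linarith)
    have ht : -v j ≤ t := le_trans (by linarith [h.1 j]) htpos.le
    have hk := key t ht
    have ht' : t * (d + 1) = lam A x v j := by
      rw [ht_def]; field_simp
    nlinarith [hk, ht', htpos, hd, sq_nonneg t]
  · intro hvj
    rcases lt_or_eq_of_le (by
      by_contra hpos
      push_neg at hpos
      set t : ℝ := lam A x v j / (d + 1) with ht_def
      have htpos : 0 < t := div_pos hpos (by linarith)
      have ht : -v j ≤ t := le_trans (by linarith [h.1 j]) htpos.le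
      have hk := key t ht
      have ht' : t * (d + 1) = lam A x v j := by
        rw [ht_def]; field_simp
      nlinarith [hk, ht', htpos, hd, sq_nonneg t] : lam A x v j ≤ 0) with hlt | heq
    · exfalso
      set t : ℝ := max (-v j) (lam A x v j / (d + 1)) with ht_def
      have ht : -v j ≤ t := le_max_left _ _
      have ht0 : t < 0 := by
        apply max_lt (by linarith)
        exact div_neg_of_neg_of_pos hlt (by linarith)
      have htl : lam A x v j ≤ t * (d + 1) := by
        have : lam A x v j / (d + 1) ≤ t := le_max_right _ _
        calc lam A x v j = (lam A x v j / (d + 1)) * (d + 1) := by field_simp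
          _ ≤ t * (d + 1) := by nlinarith
      have hk := key t ht
      nlinarith [hk, htl, ht0, hlt, hd]
    · exact heq

lemma nnls_unique {A : Matrix (Fin r) (Fin s) ℝ} {x : Fin r → ℝ}
    (hA : Function.Injective A.mulVec) {w : Fin s → ℝ} (hw0 : ∀ j, 0 ≤ w j)
    (hwl : ∀ j, lam A x w j ≤ 0) (hws : ∀ j, 0 < w j → lam A x w j = 0)
    {v : Fin s → ℝ} (hv : IsNNLS A x v) : v = w := by
  have he := expand A x v w
  have hmid : 0 ≤ ∑ j, lam A x w j * (w j - v j) := by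
    refine Finset.sum_nonneg fun j _ => ?_
    rcases lt_or_eq_of_le (hw0 j) with hj | hj
    · rw [hws j hj]; ring_nf; exact le_refl 0
    · rw [← hj]
      have : lam A x w j * (0 - v j) = -(lam A x w j * v j) := by ring
      rw [this]
      simp only [neg_nonneg]
      exact mul_nonpos_of_nonpos_of_nonneg (hwl j) (hv.1 j)
  have hle : F A x v ≤ F A x w := hv.2 w hw0
  have hsq : ∑ i, (A.mulVec w i - A.mulVec v i) ^ 2 ≤ 0 := by
    unfold F at he hle; linarith
  have hzero : ∀ i ∈ Finset.univ, (A.mulVec w i - A.mulVec v i) ^ 2 = 0 := by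
    rw [← Finset.sum_eq_zero_iff_of_nonneg fun i _ => sq_nonneg _]
    exact le_antisymm hsq (Finset.sum_nonneg fun i _ => sq_nonneg _)
  have hmv : A.mulVec w = A.mulVec v := by
    funext i
    have := hzero i (Finset.mem_univ i)
    have := pow_eq_zero_iff (n := 2) (by norm_num) |>.mp this
    linarith [this]
  exact (hA hmv).symm



noncomputable def gram (A : Matrix (Fin r) (Fin s) ℝ) : Matrix (Fin s) (Fin s) ℝ := Aᵀ * A

noncomputable def MM (A : Matrix (Fin r) (Fin s) ℝ) (S : Finset (Fin s)) :
    Matrix (Fin s) (Fin s) ℝ :=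
  Matrix.of fun j k => if j ∈ S ∧ k ∈ S then gram A j k else if j = k then 1 else 0

noncomputable def cc (A : Matrix (Fin r) (Fin s) ℝ) (x : Fin r → ℝ) (S : Finset (Fin s)) :
    Fin s → ℝ :=
  fun j => if j ∈ S then Aᵀ.mulVec x j else 0

lemma gram_apply (A : Matrix (Fin r) (Fin s) ℝ) (j k : Fin s) :
    gram A j k = ∑ i, A i j * A i k := by
  simp [gram, Matrix.mul_apply, Matrix.transpose_apply]

lemma gram_mulVec (A : Matrix (Fin r) (Fin s) ℝ) (w : Fin s → ℝ) :
    (gram A).mulVec w = Aᵀ.mulVec (A.mulVec w) := by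
  rw [gram, ← Matrix.mulVec_mulVec]

lemma dot_gram (A : Matrix (Fin r) (Fin s) ℝ) (w : Fin s → ℝ) :
    ∑ j, w j * (gram A).mulVec w j = ∑ i, (A.mulVec w i) ^ 2 := by
  rw [gram_mulVec]
  have h1 : ∀ j, Aᵀ.mulVec (A.mulVec w) j = ∑ i, A i j * A.mulVec w i := by
    intro j; simp [Matrix.mulVec, dotProduct, Matrix.transpose_apply]
  simp only [h1, Finset.mul_sum]
  rw [Finset.sum_comm]
  have h2 : ∀ i, A.mulVec w i = ∑ j, A i j * w j := fun i => rfl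
  refine Finset.sum_congr rfl fun i _ => ?_
  have h3 : ∑ j, w j * (A i j * A.mulVec w i) = (∑ j, A i j * w j) * A.mulVec w i := by
    rw [Finset.sum_mul]; exact Finset.sum_congr rfl fun j _ => by ring
  rw [h3, ← h2 i, sq]

lemma mulVec_eq_zero_of_dot_gram {A : Matrix (Fin r) (Fin s) ℝ} {w : Fin s → ℝ}
    (h : ∑ j, w j * (gram A).mulVec w j = 0) : A.mulVec w = 0 := by
  rw [dot_gram] at h
  funext i
  have hz := (Finset.sum_eq_zero_iff_of_nonneg fun i _ => sq_nonneg (A.mulVec w i)).mp h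
    i (Finset.mem_univ i)
  have := pow_eq_zero_iff (n := 2) (by norm_num) |>.mp hz
  simpa using this

lemma inj_of_det_gram {A : Matrix (Fin r) (Fin s) ℝ} (h : (gram A).det ≠ 0) :
    Function.Injective A.mulVec := by
  intro u v huv
  have h0 : (gram A).mulVec (u - v) = 0 := by
    rw [gram_mulVec, Matrix.mulVec_sub, huv, sub_self, Matrix.mulVec_zero]
  have := Matrix.eq_zero_of_mulVec_eq_zero h h0
  exact sub_eq_zero.mp this

lemma det_gram_ne_zero_iff {A : Matrix (Fin r) (Fin s) ℝ} :
    (gram A).det ≠ 0 ↔ A.rank = s := by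
  constructor
  · intro h
    have hu : IsUnit (gram A) := (Matrix.isUnit_iff_isUnit_det _).mpr (isUnit_iff_ne_zero.mpr h)
    have := Matrix.rank_of_isUnit _ hu
    rw [Fintype.card_fin] at this
    rw [← Matrix.rank_transpose_mul_self A]
    exact this
  · intro hrank
    intro hdet
    obtain ⟨v, hv, hmv⟩ := (Matrix.exists_mulVec_eq_zero_iff).mpr hdet
    have hAv : A.mulVec v = 0 := by
      apply mulVec_eq_zero_of_dot_gram
      rw [hmv]; simp
    have hvker : v ∈ LinearMap.ker A.mulVecLin := by
      simpa [Matrix.mulVecLin_apply] using hAv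
    have hrn := LinearMap.finrank_range_add_finrank_ker A.mulVecLin
    rw [Module.finrank_fin_fun] at hrn
    have hrank' : Module.finrank ℝ (LinearMap.range A.mulVecLin) = s := hrank
    have hker0 : Module.finrank ℝ (LinearMap.ker A.mulVecLin) = 0 := by omega
    rw [Submodule.finrank_eq_zero] at hker0
    rw [hker0] at hvker
    exact hv (by simpa using hvker)

lemma MM_mulVec_not_mem {A : Matrix (Fin r) (Fin s) ℝ} {S : Finset (Fin s)} {j : Fin s}
    (hj : j ∉ S) (w : Fin s → ℝ) : (MM A S).mulVec w j = w j := by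
  have : ∀ k, MM A S j k * w k = if j = k then w k else 0 := by
    intro k
    simp only [MM, Matrix.of_apply]
    rcases eq_or_ne j k with rfl | hk
    · simp [hj]
    · rw [if_neg (fun h : j ∈ S ∧ k ∈ S => hj h.1), if_neg hk, if_neg hk, zero_mul]
  calc (MM A S).mulVec w j = ∑ k, MM A S j k * w k := rfl
    _ = ∑ k, if j = k then w k else 0 := Finset.sum_congr rfl fun k _ => this k
    _ = w j := by rw [Finset.sum_ite_eq]; simp

lemma MM_mulVec_mem {A : Matrix (Fin r) (Fin s) ℝ} {S : Finset (Fin s)} {j : Fin s}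
    (hj : j ∈ S) {w : Fin s → ℝ} (hw : ∀ k ∉ S, w k = 0) :
    (MM A S).mulVec w j = (gram A).mulVec w j := by
  have : ∀ k, MM A S j k * w k = gram A j k * w k := by
    intro k
    by_cases hk : k ∈ S
    · simp [MM, hj, hk]
    · rw [hw k hk, mul_zero, mul_zero]
  calc (MM A S).mulVec w j = ∑ k, MM A S j k * w k := rfl
    _ = ∑ k, gram A j k * w k := Finset.sum_congr rfl fun k _ => this k
    _ = (gram A).mulVec w j := rfl

lemma det_MM_ne_zero {A : Matrix (Fin r) (Fin s) ℝ} (hA : Function.Injective A.mulVec)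
    (S : Finset (Fin s)) : (MM A S).det ≠ 0 := by
  have hinj : Function.Injective (MM A S).mulVec := by
    have hker : ∀ w, (MM A S).mulVec w = 0 → w = 0 := by
      intro w hw
      have hoff : ∀ k ∉ S, w k = 0 := by
        intro k hk
        rw [← MM_mulVec_not_mem hk w, hw]; rfl
      have hgram : ∀ j ∈ S, (gram A).mulVec w j = 0 := by
        intro j hj
        rw [← MM_mulVec_mem hj hoff, hw]; rfl
      have hdot : ∑ j, w j * (gram A).mulVec w j = 0 := by
        refine Finset.sum_eq_zero fun j _ => ?_
        by_cases hj : j ∈ S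
        · rw [hgram j hj, mul_zero]
        · rw [hoff j hj, zero_mul]
      have hAw : A.mulVec w = 0 := mulVec_eq_zero_of_dot_gram hdot
      have : A.mulVec w = A.mulVec 0 := by rw [hAw, Matrix.mulVec_zero]
      exact hA this
    intro u v huv
    have : (MM A S).mulVec (u - v) = 0 := by
      rw [Matrix.mulVec_sub, huv, sub_self]
    have := hker _ this
    exact sub_eq_zero.mp this
  have hu : IsUnit (MM A S) := Matrix.mulVec_injective_iff_isUnit.mp hinj
  have := (Matrix.isUnit_iff_isUnit_det _).mp hu
  exact isUnit_iff_ne_zero.mp this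

section Sol

variable {r s : ℕ}

local notation "X" => ((Fin r → Fin s → ℝ) × (Fin r → ℝ))

noncomputable def sol (S : Finset (Fin s)) (p : X) : Fin s → ℝ :=
  (MM (Matrix.of p.1) S)⁻¹.mulVec (cc (Matrix.of p.1) p.2 S)

noncomputable def lamSol (S : Finset (Fin s)) (p : X) : Fin s → ℝ :=
  lam (Matrix.of p.1) p.2 (sol S p)

lemma sol_eq_smul (S : Finset (Fin s)) (p : X) :
    sol S p = ((MM (Matrix.of p.1) S).det)⁻¹ •
      ((MM (Matrix.of p.1) S).adjugate.mulVec (cc (Matrix.of p.1) p.2 S)) := by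
  rw [sol, Matrix.inv_def, Ring.inverse_eq_inv', Matrix.smul_mulVec]

lemma MM_mulVec_sol {S : Finset (Fin s)} {p : X}
    (hdet : (MM (Matrix.of p.1) S).det ≠ 0) :
    (MM (Matrix.of p.1) S).mulVec (sol S p) = cc (Matrix.of p.1) p.2 S := by
  rw [sol, Matrix.mulVec_mulVec, Matrix.mul_nonsing_inv _ (isUnit_iff_ne_zero.mpr hdet),
    Matrix.one_mulVec]

lemma sol_not_mem {S : Finset (Fin s)} {p : X}
    (hdet : (MM (Matrix.of p.1) S).det ≠ 0) {j : Fin s} (hj : j ∉ S) :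
    sol S p j = 0 := by
  have h1 := MM_mulVec_not_mem (A := Matrix.of p.1) hj (sol S p)
  rw [MM_mulVec_sol hdet] at h1
  rw [← h1, cc, if_neg hj]

lemma eq_sol_of_system {S : Finset (Fin s)} {p : X} {v : Fin s → ℝ}
    (hdet : (MM (Matrix.of p.1) S).det ≠ 0)
    (hv : (MM (Matrix.of p.1) S).mulVec v = cc (Matrix.of p.1) p.2 S) :
    sol S p = v := by
  rw [sol, ← hv, Matrix.mulVec_mulVec, Matrix.nonsing_inv_mul _ (isUnit_iff_ne_zero.mpr hdet),
    Matrix.one_mulVec]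

lemma lam_eq_sub (A : Matrix (Fin r) (Fin s) ℝ) (x : Fin r → ℝ) (v : Fin s → ℝ) (j : Fin s) :
    lam A x v j = Aᵀ.mulVec x j - (gram A).mulVec v j := by
  rw [lam, Matrix.mulVec_sub, gram_mulVec]
  rfl

lemma lamSol_mem {S : Finset (Fin s)} {p : X}
    (hdet : (MM (Matrix.of p.1) S).det ≠ 0) {j : Fin s} (hj : j ∈ S) :
    lamSol S p j = 0 := by
  have hoff : ∀ k ∉ S, sol S p k = 0 := fun k hk => sol_not_mem hdet hk
  have h1 : (gram (Matrix.of p.1)).mulVec (sol S p) j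
      = (MM (Matrix.of p.1) S).mulVec (sol S p) j := (MM_mulVec_mem hj hoff).symm
  rw [lamSol, lam_eq_sub, h1, MM_mulVec_sol hdet, cc, if_pos hj, sub_self]

lemma system_of_kkt {A : Matrix (Fin r) (Fin s) ℝ} {x : Fin r → ℝ} {v : Fin s → ℝ}
    {S : Finset (Fin s)} (hoff : ∀ j ∉ S, v j = 0)
    (hlam : ∀ j ∈ S, lam A x v j = 0) :
    (MM A S).mulVec v = cc A x S := by
  funext j
  by_cases hj : j ∈ S
  · rw [MM_mulVec_mem hj hoff, cc, if_pos hj]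
    have := hlam j hj
    rw [lam_eq_sub] at this
    linarith
  · rw [MM_mulVec_not_mem hj, hoff j hj, cc, if_neg hj]

lemma continuous_entry (i : Fin r) (j : Fin s) : Continuous fun p : X => p.1 i j :=
  (continuous_apply j).comp ((continuous_apply i).comp continuous_fst)

lemma continuous_MM (S : Finset (Fin s)) : Continuous fun p : X => MM (Matrix.of p.1) S := by
  refine continuous_pi fun j => continuous_pi fun k => ?_
  by_cases hjk : j ∈ S ∧ k ∈ S
  · have : (fun p : X => MM (Matrix.of p.1) S j k) = fun p : X => ∑ i, p.1 i j * p.1 i k := by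
      funext p
      rw [show MM (Matrix.of p.1) S j k = gram (Matrix.of p.1) j k from if_pos hjk,
        gram_apply]
      rfl
    rw [this]
    exact continuous_finset_sum _ fun i _ => (continuous_entry i j).mul (continuous_entry i k)
  · have : (fun p : X => MM (Matrix.of p.1) S j k)
        = fun _ : X => if j = k then (1 : ℝ) else 0 := by
      funext p; exact if_neg hjk
    rw [this]
    exact continuous_const

lemma continuous_cc (S : Finset (Fin s)) :
    Continuous fun p : X => cc (Matrix.of p.1) p.2 S := by
  refine continuous_pi fun j => ?_
  by_cases hj : j ∈ S
  · have : (fun p : X => cc (Matrix.of p.1) p.2 S j) = fun p : X => ∑ i, p.1 i j * p.2 i := by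
      funext p
      rw [cc, if_pos hj]
      simp [Matrix.mulVec, dotProduct, Matrix.transpose_apply]
    rw [this]
    exact continuous_finset_sum _ fun i _ =>
      (continuous_entry i j).mul ((continuous_apply i).comp continuous_snd)
  · have : (fun p : X => cc (Matrix.of p.1) p.2 S j) = fun _ : X => (0 : ℝ) := by
      funext p; exact if_neg hj
    rw [this]
    exact continuous_const

lemma continuous_detMM (S : Finset (Fin s)) :
    Continuous fun p : X => (MM (Matrix.of p.1) S).det :=
  (continuous_MM S).matrix_det

lemma continuousOn_sol (S : Finset (Fin s)) :
    ContinuousOn (sol S) {p : X | (MM (Matrix.of p.1) S).det ≠ 0} := by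
  have hrw : sol S = fun p : X => ((MM (Matrix.of p.1) S).det)⁻¹ •
      ((MM (Matrix.of p.1) S).adjugate.mulVec (cc (Matrix.of p.1) p.2 S)) :=
    funext fun p => sol_eq_smul S p
  rw [hrw]
  refine ContinuousOn.smul (((continuous_detMM S).continuousOn).inv₀ fun p hp => hp) ?_
  exact (((continuous_MM S).matrix_adjugate).matrix_mulVec (continuous_cc S)).continuousOn

lemma continuousOn_lamSol (S : Finset (Fin s)) :
    ContinuousOn (lamSol S) {p : X | (MM (Matrix.of p.1) S).det ≠ 0} := by
  have hg : Continuous fun q : X × (Fin s → ℝ) =>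
      (Matrix.of q.1.1)ᵀ.mulVec (q.1.2 - (Matrix.of q.1.1).mulVec q.2) := by
    have hA : Continuous fun q : X × (Fin s → ℝ) => (Matrix.of q.1.1) :=
      continuous_fst.comp continuous_fst
    exact (hA.matrix_transpose).matrix_mulVec
      (((continuous_snd.comp continuous_fst)).sub (hA.matrix_mulVec continuous_snd))
  have : lamSol S = (fun q : X × (Fin s → ℝ) =>
      (Matrix.of q.1.1)ᵀ.mulVec (q.1.2 - (Matrix.of q.1.1).mulVec q.2))
        ∘ (fun p : X => (p, sol S p)) := by
    funext p; rfl
  rw [this]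
  exact hg.comp_continuousOn (continuousOn_id.prodMk (continuousOn_sol S))

end Sol

section Stability

variable {r s : ℕ}

local notation "X" => ((Fin r → Fin s → ℝ) × (Fin r → ℝ))

lemma MM_univ (A : Matrix (Fin r) (Fin s) ℝ) : MM A Finset.univ = gram A := by
  funext j k
  simp [MM]

lemma stability
    (Q : (Fin r → Fin s → ℝ) → (Fin r → ℝ) → (Fin s → ℝ))
    (hQmin : ∀ A x, (∀ i j, 0 ≤ A i j) → (∀ i, 0 ≤ x i) → (gram (Matrix.of A)).det ≠ 0 →
      IsNNLS (Matrix.of A) x (Q A x))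
    {p : X}
    (hp1 : ∀ i j, 0 ≤ p.1 i j) (hp2 : ∀ i, 0 ≤ p.2 i)
    (hdet : (gram (Matrix.of p.1)).det ≠ 0)
    (hnd : ∀ j, Q p.1 p.2 j = 0 → lam (Matrix.of p.1) p.2 (Q p.1 p.2) j ≠ 0) :
    ∃ N : Set ((Fin r → Fin s → ℝ) × (Fin r → ℝ)), IsOpen N ∧ p ∈ N ∧
      (∀ p' ∈ N, (gram (Matrix.of p'.1)).det ≠ 0) ∧
      (∀ p', p' ∈ N → (∀ i j, 0 ≤ p'.1 i j) → (∀ i, 0 ≤ p'.2 i) →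
        {j | 0 < Q p'.1 p'.2 j} = {j | 0 < Q p.1 p.2 j}) := by
  classical
  set v := Q p.1 p.2 with hv_def
  have hv : IsNNLS (Matrix.of p.1) p.2 v := hQmin _ _ hp1 hp2 hdet
  set S : Finset (Fin s) := Finset.univ.filter (fun j => 0 < v j) with hS_def
  have hSmem : ∀ j, j ∈ S ↔ 0 < v j := by
    intro j; simp [hS_def]
  have hoff : ∀ j ∉ S, v j = 0 := by
    intro j hj
    have := not_lt.mp (fun h => hj ((hSmem j).mpr h))
    exact le_antisymm this (hv.1 j)
  have hlamS : ∀ j ∈ S, lam (Matrix.of p.1) p.2 v j = 0 :=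
    fun j hj => (kkt hv j).2 ((hSmem j).mp hj)
  have hAinj := inj_of_det_gram hdet
  have hdMM := det_MM_ne_zero hAinj S
  have hsolv : sol S p = v := eq_sol_of_system hdMM (system_of_kkt hoff hlamS)
  have hlamneg : ∀ j ∉ S, lamSol S p j < 0 := by
    intro j hj
    have hlameq : lamSol S p j = lam (Matrix.of p.1) p.2 v j := by rw [lamSol, hsolv]
    rw [hlameq]
    exact lt_of_le_of_ne (kkt hv j).1 (hnd j (hoff j hj))
  set W : Set X := {q : X | (MM (Matrix.of q.1) S).det ≠ 0} with hW_def
  have hWopen : IsOpen W := isOpen_ne.preimage (continuous_detMM S)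
  set G : Set X := {q : X | (MM (Matrix.of q.1) (Finset.univ : Finset (Fin s))).det ≠ 0}
    with hG_def
  have hGopen : IsOpen G := isOpen_ne.preimage (continuous_detMM Finset.univ)
  have hGiff : ∀ q : X, q ∈ G ↔ (gram (Matrix.of q.1)).det ≠ 0 := by
    intro q; rw [hG_def]; simp only [Set.mem_setOf_eq, MM_univ]
  set N : Set X := G ∩ (W ∩ ⋂ j : Fin s,
    (if j ∈ S then W ∩ {q : X | 0 < sol S q j} else W ∩ {q : X | lamSol S q j < 0})) with hN_def
  have hNopen : IsOpen N := by
    refine hGopen.inter (hWopen.inter (isOpen_iInter_of_finite fun j => ?_))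
    by_cases hj : j ∈ S
    · rw [if_pos hj]
      exact ((continuous_apply j).comp_continuousOn
        (continuousOn_sol S)).isOpen_inter_preimage hWopen isOpen_Ioi
    · rw [if_neg hj]
      exact ((continuous_apply j).comp_continuousOn
        (continuousOn_lamSol S)).isOpen_inter_preimage hWopen isOpen_Iio
  have hdetN : ∀ p' ∈ N, (gram (Matrix.of p'.1)).det ≠ 0 := by
    intro p' hp'
    exact (hGiff p').mp hp'.1
  have hWN : ∀ p' ∈ N, (MM (Matrix.of p'.1) S).det ≠ 0 := fun p' hp' => hp'.2.1
  have hpN : p ∈ N := by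
    refine ⟨(hGiff p).mpr hdet, hdMM, Set.mem_iInter.mpr fun j => ?_⟩
    by_cases hj : j ∈ S
    · rw [if_pos hj]
      refine ⟨hdMM, ?_⟩
      show 0 < sol S p j
      rw [hsolv]
      exact (hSmem j).mp hj
    · rw [if_neg hj]
      exact ⟨hdMM, hlamneg j hj⟩
  refine ⟨N, hNopen, hpN, hdetN, ?_⟩
  intro p' hp' h1' h2'
  have hdet' := hdetN p' hp'
  have hdMM' := hWN p' hp'
  set w' := sol S p' with hw'_def
  have hw'off : ∀ j ∉ S, w' j = 0 := fun j hj => sol_not_mem hdMM' hj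
  have hw'pos : ∀ j ∈ S, 0 < w' j := by
    intro j hj
    have hmem := Set.mem_iInter.mp hp'.2.2 j
    rw [if_pos hj] at hmem
    exact hmem.2
  have hlam'S : ∀ j ∈ S, lam (Matrix.of p'.1) p'.2 w' j = 0 :=
    fun j hj => lamSol_mem hdMM' hj
  have hlam'neg : ∀ j ∉ S, lam (Matrix.of p'.1) p'.2 w' j < 0 := by
    intro j hj
    have hmem := Set.mem_iInter.mp hp'.2.2 j
    rw [if_neg hj] at hmem
    exact hmem.2
  have hw0 : ∀ j, 0 ≤ w' j := by
    intro j
    by_cases hj : j ∈ S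
    · exact (hw'pos j hj).le
    · rw [hw'off j hj]
  have hwl : ∀ j, lam (Matrix.of p'.1) p'.2 w' j ≤ 0 := by
    intro j
    by_cases hj : j ∈ S
    · exact (hlam'S j hj).le
    · exact (hlam'neg j hj).le
  have hws : ∀ j, 0 < w' j → lam (Matrix.of p'.1) p'.2 w' j = 0 := by
    intro j hj
    by_cases hjS : j ∈ S
    · exact hlam'S j hjS
    · exact absurd (hw'off j hjS) (by intro h; rw [h] at hj; exact lt_irrefl 0 hj)
  have hv' : IsNNLS (Matrix.of p'.1) p'.2 (Q p'.1 p'.2) := hQmin _ _ h1' h2' hdet'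
  have hQw : Q p'.1 p'.2 = w' := nnls_unique (inj_of_det_gram hdet') hw0 hwl hws hv'
  ext j
  simp only [Set.mem_setOf_eq, hQw, ← hv_def]
  by_cases hj : j ∈ S
  · exact iff_of_true (hw'pos j hj) ((hSmem j).mp hj)
  · refine iff_of_false ?_ ?_
    · rw [hw'off j hj]; exact lt_irrefl 0
    · rw [hoff j hj]; exact lt_irrefl 0

end Stability

section NullRank

variable {r : ℕ}

lemma continuous_gram_det {α : Type*} [TopologicalSpace α] {n : ℕ}
    {f : α → Matrix (Fin r) (Fin n) ℝ} (hf : Continuous f) :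
    Continuous fun a => (gram (f a)).det :=
  (Continuous.matrix_mul hf.matrix_transpose hf).matrix_det

lemma gram_det_lindep {n : ℕ} (A : Matrix (Fin r) (Fin n) ℝ) :
    (gram A).det = 0 ↔ ¬ LinearIndependent ℝ (fun k => (fun i => A i k)) := by
  rw [← Matrix.exists_mulVec_eq_zero_iff]
  constructor
  · rintro ⟨g, hg0, hgv⟩
    rw [Fintype.not_linearIndependent_iff]
    refine ⟨g, ?_, ?_⟩
    · have hA : A.mulVec g = 0 := mulVec_eq_zero_of_dot_gram (by rw [hgv]; simp)
      funext i
      have h1 : (∑ k, g k • (fun i => A i k)) i = ∑ k, g k * A i k := by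
        rw [Finset.sum_apply]
        exact Finset.sum_congr rfl fun k _ => rfl
      rw [h1]
      have h2 : A.mulVec g i = ∑ k, A i k * g k := rfl
      have := congr_fun hA i
      rw [h2] at this
      simpa [mul_comm] using this
    · obtain ⟨j, hj⟩ := Function.ne_iff.mp hg0
      exact ⟨j, hj⟩
  · intro h
    rw [Fintype.not_linearIndependent_iff] at h
    obtain ⟨g, hsum, j, hj⟩ := h
    refine ⟨g, fun h0 => hj (by rw [h0]; rfl), ?_⟩
    funext k
    have h2 : ∀ i, ∑ l, A i l * g l = 0 := by
      intro i
      have := congr_fun hsum i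
      rw [Finset.sum_apply] at this
      simpa [mul_comm] using this
    have h3 : (gram A).mulVec g k = ∑ l, gram A k l * g l := rfl
    rw [h3]
    simp only [gram_apply, Finset.sum_mul]
    rw [Finset.sum_comm]
    simp only [Pi.zero_apply]
    refine Finset.sum_eq_zero fun i _ => ?_
    have h4 : ∑ l, A i k * A i l * g l = A i k * ∑ l, A i l * g l := by
      rw [Finset.mul_sum]
      exact Finset.sum_congr rfl fun l _ => by ring
    rw [h4, h2 i, mul_zero]

lemma Z_null : ∀ n : ℕ, n ≤ r →
    volume {A : Fin r → Fin n → ℝ | (gram (Matrix.of A)).det = 0} = 0 := by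
  intro n
  induction n with
  | zero =>
    intro _
    have : {A : Fin r → Fin 0 → ℝ | (gram (Matrix.of A)).det = 0} = ∅ := by
      ext A
      simp [Matrix.det_isEmpty]
    rw [this]; exact measure_empty
  | succ n ih =>
    intro hn
    have hn' : n ≤ r := Nat.le_of_succ_le hn
    -- measure preserving chain
    set e1 : (Fin (n+1) → ℝ) ≃ᵐ ((Fin n → ℝ) × ℝ) :=
      (MeasurableEquiv.piFinSuccAbove (fun _ : Fin (n+1) => ℝ) 0).trans
        (MeasurableEquiv.prodComm (α := ℝ) (β := Fin n → ℝ)) with he1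
    have h1 : MeasurePreserving (⇑e1) volume volume := by
      have ha := volume_preserving_piFinSuccAbove (fun _ : Fin (n+1) => ℝ) 0
      have hb : MeasurePreserving (⇑(MeasurableEquiv.prodComm (α := ℝ) (β := Fin n → ℝ)))
          volume volume := by
        have := Measure.measurePreserving_swap (μ := (volume : Measure ℝ))
          (ν := (volume : Measure (Fin n → ℝ)))
        rwa [← Measure.volume_eq_prod, ← Measure.volume_eq_prod] at this
      exact hb.comp ha
    set e2 : (Fin r → Fin (n+1) → ℝ) ≃ᵐ (Fin r → (Fin n → ℝ) × ℝ) :=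
      MeasurableEquiv.arrowCongr' (Equiv.refl (Fin r)) e1 with he2
    have h2 : MeasurePreserving (⇑e2) volume volume := by
      rw [show (volume : Measure (Fin r → Fin (n+1) → ℝ)) = Measure.pi fun _ => volume from
        volume_pi, show (volume : Measure (Fin r → (Fin n → ℝ) × ℝ))
          = Measure.pi fun _ => volume from volume_pi]
      exact measurePreserving_arrowCongr' _ _ (Equiv.refl (Fin r)) e1 fun _ => h1
    set e3 : (Fin r → (Fin n → ℝ) × ℝ) ≃ᵐ ((Fin r → Fin n → ℝ) × (Fin r → ℝ)) :=
      MeasurableEquiv.arrowProdEquivProdArrow (Fin n → ℝ) ℝ (Fin r) with he3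
    have h3 : MeasurePreserving (⇑e3) volume volume :=
      volume_measurePreserving_arrowProdEquivProdArrow _ _ _
    have hE : MeasurePreserving (⇑e3 ∘ ⇑e2) volume volume := h3.comp h2
    -- target set
    set Mf : (Fin r → Fin n → ℝ) × (Fin r → ℝ) → Matrix (Fin r) (Fin (n+1)) ℝ :=
      fun q => Matrix.of (fun i => Fin.cons (q.2 i) (q.1 i)) with hMf
    have hMfc : Continuous Mf := by
      refine continuous_pi fun i => continuous_pi fun k => ?_
      refine Fin.cases ?_ ?_ k
      · simp only [hMf, Matrix.of_apply, Fin.cons_zero]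
        exact (continuous_apply i).comp continuous_snd
      · intro k'
        simp only [hMf, Matrix.of_apply, Fin.cons_succ]
        exact (continuous_apply k').comp ((continuous_apply i).comp continuous_fst)
    set T : Set ((Fin r → Fin n → ℝ) × (Fin r → ℝ)) := {q | (gram (Mf q)).det = 0} with hT
    have hTm : MeasurableSet T := (continuous_gram_det hMfc).measurable (measurableSet_singleton 0)
    -- preimage identification
    have hpre : (⇑e3 ∘ ⇑e2) ⁻¹' T = {A : Fin r → Fin (n+1) → ℝ | (gram (Matrix.of A)).det = 0} := by
      ext A
      simp only [Set.mem_preimage, Set.mem_setOf_eq, hT, Function.comp_apply]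
      have hM : Mf (e3 (e2 A)) = Matrix.of A := by
        funext i k
        have h1 : (e3 (e2 A)).2 i = A i 0 := rfl
        have h2 : ∀ k' : Fin n, (e3 (e2 A)).1 i k' = A i ((0 : Fin (n+1)).succAbove k') := fun _ => rfl
        simp only [hMf, Matrix.of_apply]
        refine Fin.cases ?_ ?_ k
        · rw [Fin.cons_zero, h1]
        · intro k'
          rw [Fin.cons_succ, h2 k', Fin.zero_succAbove]
      rw [hM]
    rw [← hpre, hE.measure_preimage hTm.nullMeasurableSet]
    -- Fubini
    rw [show (volume : Measure ((Fin r → Fin n → ℝ) × (Fin r → ℝ)))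
      = (volume : Measure (Fin r → Fin n → ℝ)).prod volume from Measure.volume_eq_prod _ _]
    rw [Measure.measure_prod_null hTm]
    -- sections
    have hsec : ∀ B : Fin r → Fin n → ℝ,
        LinearIndependent ℝ (fun k => (fun i => B i k)) →
        volume (Prod.mk B ⁻¹' T) = 0 := by
      intro B hB
      have hsec_eq : Prod.mk B ⁻¹' T
          = ↑(Submodule.span ℝ (Set.range (fun k => (fun i => B i k)))) := by
        ext a
        simp only [Set.mem_preimage, hT, Set.mem_setOf_eq, SetLike.mem_coe]
        have hcols : (fun k => (fun i => Mf (B, a) i k))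
            = Fin.cons a (fun k => (fun i => B i k)) := by
          funext k
          refine Fin.cases ?_ ?_ k
          · funext i; simp [hMf]
          · intro k'; funext i; simp [hMf]
        rw [gram_det_lindep, hcols]
        constructor
        · intro h
          by_contra hs
          exact h (linearIndependent_fin_cons.mpr ⟨hB, hs⟩)
        · intro hs hLI
          exact (linearIndependent_fin_cons.mp hLI).2 hs
      rw [hsec_eq]
      refine Measure.addHaar_submodule _ _ ?_
      intro htop
      have hfr : Module.finrank ℝ (Submodule.span ℝ
          (Set.range (fun k => (fun i => B i k)))) = r := by
        rw [htop]
        rw [finrank_top]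
        exact Module.finrank_fin_fun ℝ
      have hle : Module.finrank ℝ (Submodule.span ℝ
          (Set.range (fun k => (fun i => B i k)))) ≤ n := by
        refine le_trans (finrank_span_le_card _) ?_
        rw [Set.toFinset_range]
        exact le_trans (Finset.card_image_le) (by simp)
      omega
    have hae : ∀ᵐ B : (Fin r → Fin n → ℝ) ∂volume, volume (Prod.mk B ⁻¹' T) = 0 := by
      rw [ae_iff]
      refine measure_mono_null ?_ (ih hn')
      intro B hB
      simp only [Set.mem_setOf_eq] at hB ⊢
      rw [gram_det_lindep]
      intro hLI
      exact hB (hsec B hLI)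
    filter_upwards [hae] with B hB
    simpa using hB

end NullRank

section Degenerate

variable {r s : ℕ}

local notation "X" => ((Fin r → Fin s → ℝ) × (Fin r → ℝ))

noncomputable def lval (S : Finset (Fin s)) (j : Fin s) (p : X) : ℝ :=
  (Matrix.of p.1)ᵀ.mulVec ((MM (Matrix.of p.1) S).det • p.2
    - (Matrix.of p.1).mulVec ((MM (Matrix.of p.1) S).adjugate.mulVec (cc (Matrix.of p.1) p.2 S))) j

lemma continuous_lval (S : Finset (Fin s)) (j : Fin s) :
    Continuous fun p : X => lval S j p := by
  have hA : Continuous fun p : X => (Matrix.of p.1 : Matrix (Fin r) (Fin s) ℝ) := continuous_fst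
  have h1 : Continuous fun p : X => (MM (Matrix.of p.1) S).det • p.2
      - (Matrix.of p.1).mulVec ((MM (Matrix.of p.1) S).adjugate.mulVec (cc (Matrix.of p.1) p.2 S)) :=
    ((continuous_detMM S).smul continuous_snd).sub
      (hA.matrix_mulVec (((continuous_MM S).matrix_adjugate).matrix_mulVec (continuous_cc S)))
  exact (continuous_apply j).comp (hA.matrix_transpose.matrix_mulVec h1)

lemma lval_eq {S : Finset (Fin s)} {j : Fin s} {p : X}
    (hdMM : (MM (Matrix.of p.1) S).det ≠ 0) :
    lval S j p = (MM (Matrix.of p.1) S).det * lamSol S p j := by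
  have hadj : (MM (Matrix.of p.1) S).adjugate.mulVec (cc (Matrix.of p.1) p.2 S)
      = (MM (Matrix.of p.1) S).det • sol S p := by
    rw [sol_eq_smul, smul_smul, mul_inv_cancel₀ hdMM, one_smul]
  rw [lval, hadj, Matrix.mulVec_smul, ← smul_sub, Matrix.mulVec_smul]
  rw [lamSol, lam]
  simp [smul_eq_mul]

lemma lval_linear (A : Fin r → Fin s → ℝ) (S : Finset (Fin s)) (j : Fin s) :
    ∃ ℓ : (Fin r → ℝ) →ₗ[ℝ] ℝ, ∀ x, ℓ x = lval S j (A, x) := by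
  classical
  set mask : (Fin s → ℝ) →ₗ[ℝ] (Fin s → ℝ) := LinearMap.pi
    (fun k : Fin s => if k ∈ S then (LinearMap.proj k : (Fin s → ℝ) →ₗ[ℝ] ℝ) else 0) with hmaskdef
  set inner : (Fin r → ℝ) →ₗ[ℝ] (Fin r → ℝ) :=
    (MM (Matrix.of A) S).det • LinearMap.id
      - ((Matrix.of A).mulVecLin).comp
          (((MM (Matrix.of A) S).adjugate.mulVecLin).comp
            (mask.comp ((Matrix.of A)ᵀ.mulVecLin))) with hinnerdef
  refine ⟨(LinearMap.proj j).comp (((Matrix.of A)ᵀ.mulVecLin).comp inner), ?_⟩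
  intro x
  have hmask : (LinearMap.pi fun k : Fin s =>
      if k ∈ S then (LinearMap.proj k : (Fin s → ℝ) →ₗ[ℝ] ℝ) else 0)
        ((Matrix.of A)ᵀ.mulVec x) = cc (Matrix.of A) x S := by
    funext k
    simp only [LinearMap.pi_apply, cc]
    by_cases hk : k ∈ S
    · rw [if_pos hk, if_pos hk]; rfl
    · rw [if_neg hk, if_neg hk]; rfl
  simp only [hinnerdef, hmaskdef, LinearMap.comp_apply, LinearMap.sub_apply,
    LinearMap.smul_apply, LinearMap.id_apply, Matrix.mulVecLin_apply, LinearMap.proj_apply,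
    lval] at *
  rw [hmask]

lemma lval_ne_zero {A : Fin r → Fin s → ℝ} {S : Finset (Fin s)} {j : Fin s}
    (hdet : (gram (Matrix.of A)).det ≠ 0) (hjS : j ∉ S) :
    ∃ x0 : Fin r → ℝ, lval S j (A, x0) ≠ 0 := by
  classical
  have hAinj := inj_of_det_gram hdet
  have hdMM := det_MM_ne_zero hAinj S
  set e : Fin s → ℝ := Pi.single j 1 with he
  set q0 : X := (A, (Matrix.of A).mulVec e) with hq0
  have hdMM0 : (MM (Matrix.of q0.1) S).det ≠ 0 := hdMM
  set u : Fin s → ℝ := sol S q0 with hu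
  have huoff : ∀ k ∉ S, u k = 0 := fun k hk => sol_not_mem hdMM0 hk
  have hlam_eq : lamSol S q0 = (gram (Matrix.of A)).mulVec (e - u) := by
    rw [lamSol, lam, gram_mulVec]
    conv_rhs => rw [Matrix.mulVec_sub]
  have hemuj : (e - u) j = 1 := by
    simp [he, huoff j hjS, Pi.single_eq_same]
  have hemu_ne : e - u ≠ 0 := fun h => by
    have := congr_fun h j
    rw [hemuj] at this
    simp at this
  have hAemu : (Matrix.of A).mulVec (e - u) ≠ 0 := by
    intro h
    have : e - u = 0 := hAinj (by rw [h, Matrix.mulVec_zero])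
    exact hemu_ne this
  have hsum : ∑ k, (e - u) k * lamSol S q0 k = lamSol S q0 j := by
    rw [Finset.sum_eq_single j]
    · rw [hemuj, one_mul]
    · intro k _ hk
      by_cases hkS : k ∈ S
      · rw [lamSol_mem hdMM0 hkS, mul_zero]
      · have : (e - u) k = 0 := by
          simp [he, huoff k hkS, Pi.single_eq_of_ne hk]
        rw [this, zero_mul]
    · intro h; exact absurd (Finset.mem_univ j) h
  have hpos : 0 < ∑ k, (e - u) k * lamSol S q0 k := by
    rw [hlam_eq, dot_gram]
    obtain ⟨i0, hi0⟩ : ∃ i, (Matrix.of A).mulVec (e - u) i ≠ 0 := by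
      by_contra h
      push_neg at h
      exact hAemu (funext h)
    refine Finset.sum_pos' (fun i _ => sq_nonneg _) ⟨i0, Finset.mem_univ i0, ?_⟩
    positivity
  have hlamj : lamSol S q0 j ≠ 0 := by
    rw [← hsum]; exact ne_of_gt hpos
  refine ⟨q0.2, ?_⟩
  have : lval S j (A, q0.2) = (MM (Matrix.of A) S).det * lamSol S q0 j := lval_eq hdMM0
  rw [this]
  exact mul_ne_zero hdMM hlamj

lemma Bad2_null (hrs : s ≤ r) (S : Finset (Fin s)) (j : Fin s) :
    volume {p : X | j ∉ S ∧ (gram (Matrix.of p.1)).det ≠ 0 ∧ lval S j p = 0} = 0 := by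
  classical
  by_cases hjS : j ∈ S
  · have : {p : X | j ∉ S ∧ (gram (Matrix.of p.1)).det ≠ 0 ∧ lval S j p = 0} = ∅ := by
      ext p; simp [hjS]
    rw [this]; exact measure_empty
  · have hgc : Continuous fun p : X => (gram (Matrix.of p.1)).det :=
      continuous_gram_det continuous_fst
    have hm : MeasurableSet {p : X | j ∉ S ∧ (gram (Matrix.of p.1)).det ≠ 0 ∧ lval S j p = 0} := by
      have h1 : MeasurableSet {p : X | (gram (Matrix.of p.1)).det ≠ 0} :=
        (hgc.measurable (measurableSet_singleton 0)).compl
      have h2 : MeasurableSet {p : X | lval S j p = 0} :=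
        (continuous_lval S j).measurable (measurableSet_singleton 0)
      have : {p : X | j ∉ S ∧ (gram (Matrix.of p.1)).det ≠ 0 ∧ lval S j p = 0}
          = {p : X | (gram (Matrix.of p.1)).det ≠ 0} ∩ {p : X | lval S j p = 0} := by
        ext p; simp [hjS]
      rw [this]; exact h1.inter h2
    rw [show (volume : Measure ((Fin r → Fin s → ℝ) × (Fin r → ℝ)))
      = (volume : Measure (Fin r → Fin s → ℝ)).prod volume from Measure.volume_eq_prod _ _]
    rw [Measure.measure_prod_null hm]
    refine Filter.Eventually.of_forall fun A => ?_
    have hsec : volume (Prod.mk A ⁻¹' {p : X | j ∉ S ∧ (gram (Matrix.of p.1)).det ≠ 0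
        ∧ lval S j p = 0}) = 0 := by
      by_cases hdet : (gram (Matrix.of A)).det = 0
      · have : Prod.mk A ⁻¹' {p : X | j ∉ S ∧ (gram (Matrix.of p.1)).det ≠ 0
            ∧ lval S j p = 0} = ∅ := by
          ext x; simp [hdet]
        rw [this]; exact measure_empty
      · obtain ⟨ℓ, hℓ⟩ := lval_linear A S j
        obtain ⟨x0, hx0⟩ := lval_ne_zero hdet hjS
        have hker : (LinearMap.ker ℓ : Submodule ℝ (Fin r → ℝ)) ≠ ⊤ := by
          intro htop
          have : ℓ x0 = 0 := by
            have : x0 ∈ LinearMap.ker ℓ := htop ▸ Submodule.mem_top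
            exact LinearMap.mem_ker.mp this
          rw [hℓ x0] at this
          exact hx0 this
        refine measure_mono_null ?_ (Measure.addHaar_submodule volume (LinearMap.ker ℓ) hker)
        intro x hx
        simp only [Set.mem_preimage, Set.mem_setOf_eq] at hx
        have : ℓ x = 0 := by rw [hℓ x]; exact hx.2.2
        exact LinearMap.mem_ker.mpr this
    simpa using hsec

end Degenerate

section Bad1

variable {r s : ℕ}

local notation "X" => ((Fin r → Fin s → ℝ) × (Fin r → ℝ))

lemma Bad1_null (hrs : s ≤ r) :
    volume {p : X | (gram (Matrix.of p.1)).det = 0} = 0 := by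
  have hgc : Continuous fun p : X => (gram (Matrix.of p.1)).det :=
    continuous_gram_det continuous_fst
  have hm : MeasurableSet {p : X | (gram (Matrix.of p.1)).det = 0} :=
    hgc.measurable (measurableSet_singleton 0)
  rw [show (volume : Measure ((Fin r → Fin s → ℝ) × (Fin r → ℝ)))
    = (volume : Measure (Fin r → Fin s → ℝ)).prod volume from Measure.volume_eq_prod _ _]
  rw [Measure.measure_prod_null hm]
  have hae : ∀ᵐ A : (Fin r → Fin s → ℝ) ∂volume,
      volume (Prod.mk A ⁻¹' {p : X | (gram (Matrix.of p.1)).det = 0}) = 0 := by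
    rw [ae_iff]
    refine measure_mono_null ?_ (Z_null s hrs)
    intro A hA
    simp only [Set.mem_setOf_eq] at hA ⊢
    by_contra hdet
    apply hA
    have hempty : Prod.mk A ⁻¹' {p : X | (gram (Matrix.of p.1)).det = 0} = ∅ := by
      ext x; simp [hdet]
    rw [hempty]
    exact measure_empty
  filter_upwards [hae] with A hA
  simpa using hA

end Bad1

end NNLSAux

open NNLSAux in
/-- the complement of `U_{r,s}` in `ℝ₊^{r×s} × ℝ₊^r` has Lebesgue measure
zero; consequently `U_{r,s}` is dense (in the orthant) and of full measure. -/
theorem locally_constant_support_set_full_measure {r s : ℕ} (hrs : s ≤ r)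
    (Q : (Fin r → Fin s → ℝ) → (Fin r → ℝ) → (Fin s → ℝ))
    (hQ : ∀ A x, (∀ i j, 0 ≤ A i j) → (∀ i, 0 ≤ x i) → (Matrix.of A).rank = s →
      IsNNLS (Matrix.of A) x (Q A x))
    (P D U : Set ((Fin r → Fin s → ℝ) × (Fin r → ℝ)))
    (hP : P = {p | (∀ i j, 0 ≤ p.1 i j) ∧ ∀ i, 0 ≤ p.2 i})
    (hD : D = {p | p ∈ P ∧ (Matrix.of p.1).rank = s})
    (hU : U = {p | p ∈ D ∧ ∃ N : Set ((Fin r → Fin s → ℝ) × (Fin r → ℝ)),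
      IsOpen N ∧ p ∈ N ∧ N ∩ P ⊆ D ∧
        ∀ p' ∈ N ∩ P, {j | 0 < Q p'.1 p'.2 j} = {j | 0 < Q p.1 p.2 j}}) :
    volume (P \ U) = 0 ∧ P ⊆ closure U := by
  classical
  subst hU hD hP
  have hQ' : ∀ A x, (∀ i j, 0 ≤ A i j) → (∀ i, 0 ≤ x i) →
      (gram (Matrix.of A)).det ≠ 0 → IsNNLS (Matrix.of A) x (Q A x) :=
    fun A x h1 h2 hd => hQ A x h1 h2 (det_gram_ne_zero_iff.mp hd)
  set PP : Set ((Fin r → Fin s → ℝ) × (Fin r → ℝ)) :=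
    {p | (∀ i j, 0 ≤ p.1 i j) ∧ ∀ i, 0 ≤ p.2 i} with hPP
  set DD : Set ((Fin r → Fin s → ℝ) × (Fin r → ℝ)) :=
    {p | p ∈ PP ∧ (Matrix.of p.1).rank = s} with hDD
  set UU : Set ((Fin r → Fin s → ℝ) × (Fin r → ℝ)) :=
    {p | p ∈ DD ∧ ∃ N : Set ((Fin r → Fin s → ℝ) × (Fin r → ℝ)),
      IsOpen N ∧ p ∈ N ∧ N ∩ PP ⊆ DD ∧
        ∀ p' ∈ N ∩ PP, {j | 0 < Q p'.1 p'.2 j} = {j | 0 < Q p.1 p.2 j}} with hUU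
  have hmain : volume (PP \ UU) = 0 := by
    have hcov : PP \ UU ⊆ {p | (gram (Matrix.of p.1)).det = 0}
        ∪ ⋃ (S : Finset (Fin s)) (j : Fin s),
          {p | j ∉ S ∧ (gram (Matrix.of p.1)).det ≠ 0 ∧ lval S j p = 0} := by
      rintro p ⟨hpP, hpU⟩
      by_cases hdet : (gram (Matrix.of p.1)).det = 0
      · exact Or.inl hdet
      · right
        have hrank := det_gram_ne_zero_iff.mp hdet
        have hp1 : ∀ i j, 0 ≤ p.1 i j := hpP.1
        have hp2 : ∀ i, 0 ≤ p.2 i := hpP.2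
        by_cases hnd : ∀ j, Q p.1 p.2 j = 0 →
            lam (Matrix.of p.1) p.2 (Q p.1 p.2) j ≠ 0
        · exfalso
          apply hpU
          obtain ⟨N, hNo, hpN, hNdet, hNsupp⟩ := stability Q hQ' hp1 hp2 hdet hnd
          refine ⟨⟨hpP, hrank⟩, N, hNo, hpN, ?_, ?_⟩
          · rintro p' ⟨hp'N, hp'P⟩
            exact ⟨hp'P, det_gram_ne_zero_iff.mp (hNdet p' hp'N)⟩
          · rintro p' ⟨hp'N, hp'P⟩
            exact hNsupp p' hp'N hp'P.1 hp'P.2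
        · push_neg at hnd
          obtain ⟨j, hvj0, hlamj⟩ := hnd
          have hv : IsNNLS (Matrix.of p.1) p.2 (Q p.1 p.2) := hQ' _ _ hp1 hp2 hdet
          set S : Finset (Fin s) := Finset.univ.filter (fun k => 0 < Q p.1 p.2 k) with hS
          have hSmem : ∀ k, k ∈ S ↔ 0 < Q p.1 p.2 k := by intro k; simp [hS]
          have hjS : j ∉ S := by
            intro h
            have := (hSmem j).mp h
            rw [hvj0] at this
            exact lt_irrefl 0 this
          have hoff : ∀ k ∉ S, Q p.1 p.2 k = 0 := by
            intro k hk
            have := not_lt.mp (fun h => hk ((hSmem k).mpr h))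
            exact le_antisymm this (hv.1 k)
          have hlamS : ∀ k ∈ S, lam (Matrix.of p.1) p.2 (Q p.1 p.2) k = 0 :=
            fun k hk => (kkt hv k).2 ((hSmem k).mp hk)
          have hdMM := det_MM_ne_zero (inj_of_det_gram hdet) S
          have hsolv : sol S p = Q p.1 p.2 :=
            eq_sol_of_system hdMM (system_of_kkt hoff hlamS)
          have hlval : lval S j p = 0 := by
            rw [lval_eq hdMM, lamSol, hsolv, hlamj, mul_zero]
          exact Set.mem_iUnion.mpr ⟨S, Set.mem_iUnion.mpr ⟨j, ⟨hjS, hdet, hlval⟩⟩⟩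
    exact measure_mono_null hcov
      (measure_union_null (Bad1_null hrs)
        (measure_iUnion_null fun S => measure_iUnion_null fun j => Bad2_null hrs S j))
  refine ⟨hmain, ?_⟩
  intro p hpP
  rw [mem_closure_iff]
  intro o ho hpo
  obtain ⟨ε, hε, hball⟩ := Metric.isOpen_iff.mp ho p hpo
  set q : (Fin r → Fin s → ℝ) × (Fin r → ℝ) :=
    (fun i j => p.1 i j + ε / 2, fun i => p.2 i + ε / 2) with hq
  have hqp : dist q p ≤ ε / 2 := by
    rw [Prod.dist_eq]
    refine max_le ?_ ?_
    · refine (dist_pi_le_iff (by positivity)).mpr fun i => ?_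
      refine (dist_pi_le_iff (by positivity)).mpr fun j => ?_
      rw [Real.dist_eq]
      have : q.1 i j - p.1 i j = ε / 2 := by simp [hq]
      rw [this, abs_of_pos (by positivity)]
    · refine (dist_pi_le_iff (by positivity)).mpr fun i => ?_
      rw [Real.dist_eq]
      have : q.2 i - p.2 i = ε / 2 := by simp [hq]
      rw [this, abs_of_pos (by positivity)]
  have hsubo : Metric.ball q (ε / 4) ⊆ o := by
    intro y hy
    apply hball
    have hyq : dist y q < ε / 4 := Metric.mem_ball.mp hy
    have : dist y p ≤ dist y q + dist q p := dist_triangle _ _ _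
    exact Metric.mem_ball.mpr (by linarith)
  have hsubP : Metric.ball q (ε / 4) ⊆ PP := by
    intro y hy
    have hyq : dist y q < ε / 4 := Metric.mem_ball.mp hy
    constructor
    · intro i j
      have h1 : dist (y.1 i j) (q.1 i j) ≤ dist y q :=
        le_trans (le_trans (dist_le_pi_dist (y.1 i) (q.1 i) j)
          (dist_le_pi_dist y.1 q.1 i)) (by rw [Prod.dist_eq]; exact le_max_left _ _)
      have h2 : |y.1 i j - q.1 i j| < ε / 4 := by
        rw [← Real.dist_eq]; exact lt_of_le_of_lt h1 hyq
      have h3 := (abs_lt.mp h2).1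
      have h4 : q.1 i j = p.1 i j + ε / 2 := by simp [hq]
      have h5 := hpP.1 i j
      linarith
    · intro i
      have h1 : dist (y.2 i) (q.2 i) ≤ dist y q :=
        le_trans (dist_le_pi_dist y.2 q.2 i) (by rw [Prod.dist_eq]; exact le_max_right _ _)
      have h2 : |y.2 i - q.2 i| < ε / 4 := by
        rw [← Real.dist_eq]; exact lt_of_le_of_lt h1 hyq
      have h3 := (abs_lt.mp h2).1
      have h4 : q.2 i = p.2 i + ε / 2 := by simp [hq]
      have h5 := hpP.2 i
      linarith
  have hpos : 0 < volume (Metric.ball q (ε / 4)) :=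
    Metric.measure_ball_pos _ q (by positivity)
  by_contra hne
  rw [Set.not_nonempty_iff_eq_empty] at hne
  have hsubdiff : Metric.ball q (ε / 4) ⊆ PP \ UU := by
    intro y hy
    refine ⟨hsubP hy, fun hyU => ?_⟩
    have : y ∈ o ∩ UU := ⟨hsubo hy, hyU⟩
    rw [hne] at this
    exact this
  have : volume (Metric.ball q (ε / 4)) = 0 := measure_mono_null hsubdiff hmain
  rw [this] at hpos
  exact lt_irrefl 0 hpos
end

section
/- Suppose (A, x) ∈ U_{r,s} and T = supp q(A,x). Then for each row index i, the partial derivative of q(A,x) with respect to the i-th row of A satisfies: its (T × T) block equals −(A_{:,T}†)_{:,i} (A_{:,T}† x)ᵀ + ((I − A_{:,T} A_{:,T}†) x)_i · A_{:,T}† (A_{:,T}†)ᵀ, and all entries outside T × T are zero. -/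
open Matrix

open Module

lemma aux_lin_zero {L C δ : ℝ} (hδ : 0 < δ)
    (h : ∀ t : ℝ, |t| < δ → 0 ≤ t * L + t ^ 2 * C) : L = 0 := by
  by_contra hL
  have hLpos : 0 < |L| := abs_pos.mpr hL
  set m : ℝ := min (δ / (2 * |L|)) (1 / (2 * (|C| + 1))) with hm
  have hm0 : 0 < m := by
    apply lt_min
    · positivity
    · positivity
  have hmC : m * |C| < 1 / 2 := by
    have h1 : m ≤ 1 / (2 * (|C| + 1)) := min_le_right _ _
    have h2 : 0 ≤ |C| := abs_nonneg _
    have : m * |C| ≤ (1 / (2 * (|C| + 1))) * |C| := by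
      apply mul_le_mul_of_nonneg_right h1 h2
    calc m * |C| ≤ (1 / (2 * (|C| + 1))) * |C| := this
      _ < 1 / 2 := by
        rw [div_mul_eq_mul_div, div_lt_div_iff₀ (by positivity) (by norm_num)]
        nlinarith
  have ht : |(-(L * m))| < δ := by
    rw [abs_neg, abs_mul, abs_of_pos hm0]
    have h1 : m ≤ δ / (2 * |L|) := min_le_left _ _
    calc |L| * m ≤ |L| * (δ / (2 * |L|)) := by
          exact mul_le_mul_of_nonneg_left h1 (abs_nonneg _)
      _ = δ / 2 := by field_simp
      _ < δ := by linarith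
  have := h (-(L * m)) ht
  have hC : C ≤ |C| := le_abs_self C
  have hL2 : 0 < L ^ 2 := by positivity
  nlinarith [sq_abs L, sq_abs C, mul_pos hL2 hm0]

lemma nnls_stationary {r s : ℕ} {A : Matrix (Fin r) (Fin s) ℝ} {x : Fin r → ℝ} {v : Fin s → ℝ}
    (hv : IsNNLS A x v) {j : Fin s} (hj : 0 < v j) :
    ∑ i', A i' j * (x i' - A.mulVec v i') = 0 := by
  obtain ⟨hv0, hmin⟩ := hv
  set S : ℝ := ∑ i', A i' j * (x i' - A.mulVec v i') with hS
  have key : ∀ t : ℝ, |t| < v j →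
      0 ≤ t * (-2 * S) + t ^ 2 * (∑ i', (A i' j) ^ 2) := by
    intro t ht
    have hw0 : ∀ k, 0 ≤ (v + t • (Pi.single j (1:ℝ) : Fin s → ℝ)) k := by
      intro k
      by_cases hk : k = j
      · subst hk
        simp only [Pi.add_apply, Pi.smul_apply, Pi.single_eq_same, smul_eq_mul, mul_one]
        linarith [(abs_lt.mp ht).1]
      · simp [Pi.single_eq_of_ne hk, hv0 k]
    have hineq := hmin _ hw0
    have hmv : A.mulVec (v + t • (Pi.single j (1:ℝ) : Fin s → ℝ)) = fun i' => A.mulVec v i' + t * A i' j := by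
      funext i'
      rw [mulVec_add, mulVec_smul]
      simp [mulVec_single, mul_comm]
    rw [hmv] at hineq
    have expand : ∑ i', (x i' - (A.mulVec v i' + t * A i' j)) ^ 2
        = ∑ i', ((x i' - A.mulVec v i') ^ 2
            + (t * (-2 * (A i' j * (x i' - A.mulVec v i'))) + t ^ 2 * (A i' j) ^ 2)) := by
      apply Finset.sum_congr rfl
      intro i' _
      ring
    rw [expand, Finset.sum_add_distrib] at hineq
    have h2 : 0 ≤ ∑ i', (t * (-2 * (A i' j * (x i' - A.mulVec v i'))) + t ^ 2 * (A i' j) ^ 2) := by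
      linarith
    have e1 : ∑ i', t * (-2 * (A i' j * (x i' - A.mulVec v i'))) = t * (-2 * S) := by
      rw [hS, Finset.mul_sum, Finset.mul_sum]
    have e2 : ∑ i', t ^ 2 * (A i' j) ^ 2 = t ^ 2 * ∑ i', (A i' j) ^ 2 :=
      (Finset.mul_sum _ _ _).symm
    calc (0:ℝ) ≤ _ := h2
      _ = t * (-2 * S) + t ^ 2 * (∑ i', (A i' j) ^ 2) := by
        rw [Finset.sum_add_distrib, e1, e2]
  have := aux_lin_zero hj key
  linarith

lemma mulVec_inj_of_rank {m : Type*} [Fintype m] {s : ℕ} {B : Matrix m (Fin s) ℝ}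
    (h : B.rank = s) : Function.Injective B.mulVec := by
  have hker : LinearMap.ker B.mulVecLin = ⊥ := by
    have h1 := LinearMap.finrank_range_add_finrank_ker B.mulVecLin
    rw [show finrank ℝ (Fin s → ℝ) = s by simp] at h1
    have h2 : finrank ℝ (LinearMap.range B.mulVecLin) = s := h
    have h3 : finrank ℝ (LinearMap.ker B.mulVecLin) = 0 := by omega
    exact Submodule.finrank_eq_zero.mp h3
  have := LinearMap.ker_eq_bot.mp hker
  exact this

lemma isUnit_gram {m n : Type*} [Fintype m] [Fintype n] [DecidableEq n]
    {B : Matrix m n ℝ} (hB : Function.Injective B.mulVec) : IsUnit (Bᵀ * B) := by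
  apply Matrix.mulVec_injective_iff_isUnit.mp
  intro u v huv
  apply hB
  have hsub : (Bᵀ * B).mulVec (u - v) = 0 := by
    rw [Matrix.mulVec_sub, huv, sub_self]
  have hdot : (u - v) ⬝ᵥ (Bᵀ * B).mulVec (u - v) = 0 := by rw [hsub, dotProduct_zero]
  rw [← Matrix.mulVec_mulVec, dotProduct_mulVec, vecMul_transpose,
    dotProduct_self_eq_zero] at hdot
  rwa [Matrix.mulVec_sub, sub_eq_zero] at hdot

lemma submatrix_mulVec_eq {r s : ℕ} (A : Matrix (Fin r) (Fin s) ℝ) (T : Finset (Fin s))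
    (c : {j // j ∈ T} → ℝ) :
    (A.submatrix id (Subtype.val : {j // j ∈ T} → Fin s)).mulVec c
      = A.mulVec (fun j => if h : j ∈ T then c ⟨j, h⟩ else 0) := by
  funext i'
  simp only [Matrix.mulVec, dotProduct, Matrix.submatrix_apply, id_eq]
  have hres : ∑ x : Fin s, (A i' x * if h : x ∈ T then c ⟨x, h⟩ else 0)
      = ∑ x ∈ T, (A i' x * if h : x ∈ T then c ⟨x, h⟩ else 0) :=
    (Finset.sum_subset (Finset.subset_univ T) (fun x _ hx => by simp [hx])).symm
  rw [hres, ← Finset.sum_attach T (fun j => A i' j * if h : j ∈ T then c ⟨j, h⟩ else 0),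
    Finset.univ_eq_attach]
  apply Finset.sum_congr rfl
  intro x _
  simp [x.2]

lemma nnls_formula {r s : ℕ} {A' : Matrix (Fin r) (Fin s) ℝ} {x : Fin r → ℝ} {v : Fin s → ℝ}
    (hv : IsNNLS A' x v) (T : Finset (Fin s)) (hsupp : ∀ j, 0 < v j ↔ j ∈ T)
    (hrank : A'.rank = s) :
    v = fun j => if h : j ∈ T then
      (pinv (A'.submatrix id (Subtype.val : {j // j ∈ T} → Fin s))).mulVec x ⟨j, h⟩ else 0 := by
  set B := A'.submatrix id (Subtype.val : {j // j ∈ T} → Fin s) with hB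
  have hAinj : Function.Injective A'.mulVec := mulVec_inj_of_rank hrank
  have hBinj : Function.Injective B.mulVec := by
    intro c d hcd
    rw [hB, submatrix_mulVec_eq, submatrix_mulVec_eq] at hcd
    have := hAinj hcd
    funext α
    have h2 := congrFun this ↑α
    simpa [α.2] using h2
  have hGu : IsUnit ((Bᵀ * B).det) := (Matrix.isUnit_iff_isUnit_det _).mp (isUnit_gram hBinj)
  set vT : {j // j ∈ T} → ℝ := fun α => v ↑α with hvT
  have hveq : v = fun j => if h : j ∈ T then vT ⟨j, h⟩ else 0 := by
    funext j
    by_cases hj : j ∈ T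
    · simp [hj, hvT]
    · have h1 : ¬ 0 < v j := fun h => hj ((hsupp j).mp h)
      have h2 : 0 ≤ v j := hv.1 j
      simp [hj]
      linarith
  have hAv : A'.mulVec v = B.mulVec vT := by
    rw [hB, submatrix_mulVec_eq, ← hveq]
  have heq : (Bᵀ * B).mulVec vT = Bᵀ.mulVec x := by
    funext α
    have hst := nnls_stationary hv ((hsupp ↑α).mpr α.2)
    rw [hAv] at hst
    have hBA : ∀ i', B i' α = A' i' ↑α := fun i' => rfl
    have expand : ∑ i', A' i' ↑α * (x i' - B.mulVec vT i')
        = ∑ i', B i' α * x i' - ∑ i', B i' α * B.mulVec vT i' := by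
      rw [← Finset.sum_sub_distrib]
      apply Finset.sum_congr rfl
      intro i' _
      rw [hBA]
      ring
    rw [expand] at hst
    have hL : (Bᵀ * B).mulVec vT α = ∑ i', B i' α * B.mulVec vT i' := by
      rw [← Matrix.mulVec_mulVec]
      simp [Matrix.mulVec, dotProduct, Matrix.transpose_apply]
    have hR : Bᵀ.mulVec x α = ∑ i', B i' α * x i' := by
      simp [Matrix.mulVec, dotProduct, Matrix.transpose_apply]
    rw [hL, hR]
    linarith
  have hsol : vT = (pinv B).mulVec x := by
    have : (Bᵀ * B)⁻¹.mulVec ((Bᵀ * B).mulVec vT) = (Bᵀ * B)⁻¹.mulVec (Bᵀ.mulVec x) := by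
      rw [heq]
    rw [Matrix.mulVec_mulVec, Matrix.nonsing_inv_mul _ hGu, Matrix.one_mulVec] at this
    rw [this, pinv, ← Matrix.mulVec_mulVec]
  rw [hveq, hsol]

section Deriv

attribute [local instance] Matrix.linftyOpNormedAddCommGroup Matrix.linftyOpNormedSpace
  Matrix.linftyOpNormedRing Matrix.linftyOpNormedAlgebra

variable {r s : ℕ} (A : Matrix (Fin r) (Fin s) ℝ) (i : Fin r) (T : Finset (Fin s))
  (x : Fin r → ℝ)

/-- linear map sending `h` to the matrix supported on row `i` with entries `h ∘ val`. -/
def rowL : (Fin s → ℝ) →ₗ[ℝ] Matrix (Fin r) {j // j ∈ T} ℝ where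
  toFun h := Matrix.of fun i' α => if i' = i then h ↑α else 0
  map_add' h h' := by
    ext i' α
    by_cases hi : i' = i <;> simp [hi]
  map_smul' c h := by
    ext i' α
    by_cases hi : i' = i <;> simp [hi]

def embedL : ({j // j ∈ T} → ℝ) →ₗ[ℝ] (Fin s → ℝ) where
  toFun y := fun j => if h : j ∈ T then y ⟨j, h⟩ else 0
  map_add' y z := by
    funext j
    by_cases h : j ∈ T <;> simp [h]
  map_smul' c y := by
    funext j
    by_cases h : j ∈ T <;> simp [h]

/-- mulVec by a fixed vector, as a linear map in the matrix argument. -/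
def mvL {m n : Type*} [Fintype m] [Fintype n] (y : m → ℝ) :
    Matrix n m ℝ →ₗ[ℝ] (n → ℝ) where
  toFun P := P.mulVec y
  map_add' P Q := Matrix.add_mulVec P Q y
  map_smul' c P := by
    simp [Matrix.smul_mulVec]

noncomputable def clm2 {E F G : Type*} [NormedAddCommGroup E] [NormedSpace ℝ E]
    [NormedAddCommGroup F] [NormedSpace ℝ F] [NormedAddCommGroup G] [NormedSpace ℝ G]
    [FiniteDimensional ℝ E] [FiniteDimensional ℝ F]
    (b : E →ₗ[ℝ] F →ₗ[ℝ] G) : E →L[ℝ] F →L[ℝ] G :=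
  LinearMap.toContinuousLinearMap
    { toFun := fun e => LinearMap.toContinuousLinearMap (b e)
      map_add' := fun e e' => by ext f; simp
      map_smul' := fun c e => by ext f; simp }

@[simp] lemma clm2_apply {E F G : Type*} [NormedAddCommGroup E] [NormedSpace ℝ E]
    [NormedAddCommGroup F] [NormedSpace ℝ F] [NormedAddCommGroup G] [NormedSpace ℝ G]
    [FiniteDimensional ℝ E] [FiniteDimensional ℝ F]
    (b : E →ₗ[ℝ] F →ₗ[ℝ] G) (e : E) (f : F) : clm2 b e f = b e f := rfl

/-- matrix multiplication as a bilinear map -/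
def matMulL {l m n : Type*} [Fintype l] [Fintype m] [Fintype n] :
    Matrix l m ℝ →ₗ[ℝ] Matrix m n ℝ →ₗ[ℝ] Matrix l n ℝ :=
  LinearMap.mk₂ ℝ (· * ·) Matrix.add_mul (fun c P Q => Matrix.smul_mul c P Q)
    Matrix.mul_add (fun c P Q => Matrix.mul_smul P c Q)

/-- matrix-vector multiplication as a bilinear map -/
def mulVecL {m n : Type*} [Fintype m] [Fintype n] :
    Matrix m n ℝ →ₗ[ℝ] (n → ℝ) →ₗ[ℝ] (m → ℝ) :=
  LinearMap.mk₂ ℝ Matrix.mulVec Matrix.add_mulVec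
    (fun c P y => Matrix.smul_mulVec c P y) Matrix.mulVec_add
    (fun c P y => Matrix.mulVec_smul P c y)

def colL : (Fin s → ℝ) →ₗ[ℝ] Matrix {j // j ∈ T} (Fin r) ℝ where
  toFun h := Matrix.of fun α i' => if i' = i then h ↑α else 0
  map_add' h h' := by
    ext α i'
    by_cases hi : i' = i <;> simp [hi]
  map_smul' c h := by
    ext α i'
    by_cases hi : i' = i <;> simp [hi]

/-- the constant part of the affine map `a ↦ B a`. -/
def Km : Matrix (Fin r) {j // j ∈ T} ℝ :=
  Matrix.of fun i' α => if i' = i then 0 else A i' ↑α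

/-- the modified submatrix, as a function of the new row `a`. -/
def Bf (a : Fin s → ℝ) : Matrix (Fin r) {j // j ∈ T} ℝ := rowL i T a + Km A i T

lemma Bf_eq (a : Fin s → ℝ) :
    Bf A i T a = (Matrix.of fun i' j' => if i' = i then a j' else A i' j').submatrix id
      (Subtype.val : {j // j ∈ T} → Fin s) := by
  ext i' α
  by_cases hi : i' = i <;> simp [Bf, rowL, Km, hi]

lemma Bf_base : Bf A i T (A i) = A.submatrix id (Subtype.val : {j // j ∈ T} → Fin s) := by
  ext i' α
  by_cases hi : i' = i <;> simp [Bf, rowL, Km, hi]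


lemma Bf_transpose (a : Fin s → ℝ) : (Bf A i T a)ᵀ = colL i T a + (Km A i T)ᵀ := by
  ext α i'
  by_cases hi : i' = i <;> simp [Bf, rowL, colL, Km, hi]

noncomputable def Mspec : Matrix (Fin s) (Fin s) ℝ :=
  Matrix.of fun β α =>
    if hβ : β ∈ T then
      if hα : α ∈ T then
        -(pinv (A.submatrix id (Subtype.val : {j // j ∈ T} → Fin s)) ⟨β, hβ⟩ i *
            (pinv (A.submatrix id (Subtype.val : {j // j ∈ T} → Fin s))).mulVec x ⟨α, hα⟩) +
          (x i - ((A.submatrix id (Subtype.val : {j // j ∈ T} → Fin s)) *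
              pinv (A.submatrix id (Subtype.val : {j // j ∈ T} → Fin s))).mulVec x i) *
            (pinv (A.submatrix id (Subtype.val : {j // j ∈ T} → Fin s)) *
              (pinv (A.submatrix id (Subtype.val : {j // j ∈ T} → Fin s)))ᵀ) ⟨β, hβ⟩ ⟨α, hα⟩
      else 0
    else 0

lemma colL_mulVec (h : Fin s → ℝ) (y : Fin r → ℝ) :
    (colL i T h).mulVec y = fun α : {j // j ∈ T} => h ↑α * y i := by
  funext α
  simp only [Matrix.mulVec, dotProduct, colL, LinearMap.coe_mk, AddHom.coe_mk,
    Matrix.of_apply, ite_mul, zero_mul]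
  rw [Finset.sum_ite_eq' Finset.univ i (fun i' => h ↑α * y i')]
  simp

lemma rowL_mulVec (h : Fin s → ℝ) (w : {j // j ∈ T} → ℝ) :
    (rowL i T h).mulVec w = fun i' => if i' = i then ∑ α : {j // j ∈ T}, h ↑α * w α else 0 := by
  funext i'
  simp only [Matrix.mulVec, dotProduct, rowL, LinearMap.coe_mk, AddHom.coe_mk,
    Matrix.of_apply, ite_mul, zero_mul]
  by_cases hi : i' = i <;> simp [hi]

lemma transpose_mulVec_row (P : Matrix (Fin r) {j // j ∈ T} ℝ) (S : ℝ) :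
    Pᵀ.mulVec (fun i' => if i' = i then S else 0) = fun γ => P i γ * S := by
  funext γ
  simp only [Matrix.mulVec, dotProduct, Matrix.transpose_apply, mul_ite, mul_zero]
  rw [Finset.sum_ite_eq' Finset.univ i (fun i' => P i' γ * S)]
  simp

lemma sum_dite_subtype' (T : Finset (Fin s)) (f : {j // j ∈ T} → ℝ) :
    ∑ k : Fin s, (if h : k ∈ T then f ⟨k, h⟩ else 0) = ∑ γ : {j // j ∈ T}, f γ := by
  have hres : ∑ k : Fin s, (if h : k ∈ T then f ⟨k, h⟩ else 0)
      = ∑ k ∈ T, (if h : k ∈ T then f ⟨k, h⟩ else 0) :=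
    (Finset.sum_subset (Finset.subset_univ T) (fun k _ hk => by simp [hk])).symm
  rw [hres, Finset.univ_eq_attach,
    ← Finset.sum_attach T (fun k => if h : k ∈ T then f ⟨k, h⟩ else 0)]
  apply Finset.sum_congr rfl
  intro k _
  simp [k.2]

lemma pinv_mul_pinv_t {m n : Type*} [Fintype m] [Fintype n] [DecidableEq n]
    (B : Matrix m n ℝ) (hdet : IsUnit ((Bᵀ * B).det)) :
    pinv B * (pinv B)ᵀ = (Bᵀ * B)⁻¹ := by
  have hsymm : ((Bᵀ * B)⁻¹)ᵀ = (Bᵀ * B)⁻¹ := by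
    rw [Matrix.transpose_nonsing_inv, Matrix.transpose_mul, Matrix.transpose_transpose]
  rw [pinv, Matrix.transpose_mul, hsymm]
  calc (Bᵀ * B)⁻¹ * Bᵀ * (Bᵀᵀ * (Bᵀ * B)⁻¹) = (Bᵀ * B)⁻¹ * (Bᵀ * B) * (Bᵀ * B)⁻¹ := by
        rw [Matrix.transpose_transpose, Matrix.mul_assoc ((Bᵀ * B)⁻¹) Bᵀ (B * (Bᵀ * B)⁻¹),
          ← Matrix.mul_assoc Bᵀ B ((Bᵀ * B)⁻¹), ← Matrix.mul_assoc ((Bᵀ * B)⁻¹) (Bᵀ * B) ((Bᵀ * B)⁻¹)]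
    _ = (Bᵀ * B)⁻¹ := by
        rw [Matrix.nonsing_inv_mul _ hdet, Matrix.one_mul]

noncomputable def MspecB (B : Matrix (Fin r) {j // j ∈ T} ℝ) : Matrix (Fin s) (Fin s) ℝ :=
  Matrix.of fun β α =>
    if hβ : β ∈ T then
      if hα : α ∈ T then
        -(pinv B ⟨β, hβ⟩ i * (pinv B).mulVec x ⟨α, hα⟩) +
          (x i - (B * pinv B).mulVec x i) * (pinv B * (pinv B)ᵀ) ⟨β, hβ⟩ ⟨α, hα⟩
      else 0
    else 0

lemma Mspec_eq : Mspec A i T x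
    = MspecB i T x (A.submatrix id (Subtype.val : {j // j ∈ T} → Fin s)) := rfl

lemma deriv_entry (B : Matrix (Fin r) {j // j ∈ T} ℝ) (hdet : IsUnit ((Bᵀ * B).det))
    (h : Fin s → ℝ) :
    embedL T ((Bᵀ * B)⁻¹.mulVec ((colL i T h).mulVec x)
      + (-((Bᵀ * B)⁻¹ * (Bᵀ * rowL i T h + colL i T h * B) * (Bᵀ * B)⁻¹)).mulVec (Bᵀ.mulVec x))
    = (MspecB i T x B).mulVec h := by
  classical
  set w : {j // j ∈ T} → ℝ := (Bᵀ * B)⁻¹.mulVec (Bᵀ.mulVec x) with hwdef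
  have hw : (pinv B).mulVec x = w := by
    rw [pinv, ← Matrix.mulVec_mulVec]
  set S : ℝ := ∑ α : {j // j ∈ T}, h ↑α * w α with hSdef
  have hstep1 : (-((Bᵀ * B)⁻¹ * (Bᵀ * rowL i T h + colL i T h * B) * (Bᵀ * B)⁻¹)).mulVec
      (Bᵀ.mulVec x)
      = -((Bᵀ * B)⁻¹.mulVec ((fun γ : {j // j ∈ T} => B i γ * S)
          + fun α : {j // j ∈ T} => h ↑α * B.mulVec w i)) := by
    rw [Matrix.neg_mulVec]
    congr 1
    rw [← Matrix.mulVec_mulVec, ← Matrix.mulVec_mulVec, ← hwdef, Matrix.add_mulVec,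
      ← Matrix.mulVec_mulVec, ← Matrix.mulVec_mulVec, rowL_mulVec, colL_mulVec,
      transpose_mulVec_row, ← hSdef]
  rw [hstep1]
  funext j
  by_cases hβ : j ∈ T
  · have hembed : ∀ y : {j // j ∈ T} → ℝ, embedL T y j = y ⟨j, hβ⟩ := fun y => dif_pos hβ
    rw [hembed, Pi.add_apply, Pi.neg_apply, colL_mulVec]
    have hmv : ∀ (y : {j // j ∈ T} → ℝ) (β : {j // j ∈ T}),
        ((Bᵀ * B)⁻¹.mulVec y) β = ∑ γ : {j // j ∈ T}, (Bᵀ * B)⁻¹ β γ * y γ := fun y β => rfl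
    rw [hmv, hmv]
    have hBpw : (B * pinv B).mulVec x i = (B.mulVec w) i := by
      rw [← Matrix.mulVec_mulVec, hw]
    have hpp : pinv B * (pinv B)ᵀ = (Bᵀ * B)⁻¹ := pinv_mul_pinv_t B hdet
    have hMk : ∀ k, MspecB i T x B j k * h k
        = if hα : k ∈ T then
            (-(pinv B ⟨j, hβ⟩ i * w ⟨k, hα⟩)
              + (x i - B.mulVec w i) * (Bᵀ * B)⁻¹ ⟨j, hβ⟩ ⟨k, hα⟩) * h k
          else 0 := by
      intro k
      by_cases hα : k ∈ T
      · simp only [MspecB, Matrix.of_apply, dif_pos hβ, dif_pos hα, hw, hBpw, hpp]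
      · simp [MspecB, hβ, hα]
    have hRHS : (MspecB i T x B).mulVec h j
        = ∑ γ : {j // j ∈ T}, (-(pinv B ⟨j, hβ⟩ i * w γ)
            + (x i - B.mulVec w i) * (Bᵀ * B)⁻¹ ⟨j, hβ⟩ γ) * h ↑γ := by
      calc (MspecB i T x B).mulVec h j = ∑ k, MspecB i T x B j k * h k := rfl
        _ = ∑ k, (if hα : k ∈ T then
            (-(pinv B ⟨j, hβ⟩ i * w ⟨k, hα⟩)
              + (x i - B.mulVec w i) * (Bᵀ * B)⁻¹ ⟨j, hβ⟩ ⟨k, hα⟩) * h k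
          else 0) := Finset.sum_congr rfl (fun k _ => hMk k)
        _ = _ := by
            simpa using sum_dite_subtype' T (fun γ : {j // j ∈ T} =>
              (-(pinv B ⟨j, hβ⟩ i * w γ)
                + (x i - B.mulVec w i) * (Bᵀ * B)⁻¹ ⟨j, hβ⟩ γ) * h ↑γ)
    rw [hRHS]
    have hPsum : pinv B ⟨j, hβ⟩ i = ∑ γ : {j // j ∈ T}, (Bᵀ * B)⁻¹ ⟨j, hβ⟩ γ * B i γ := by
      rw [pinv]
      simp [Matrix.mul_apply]
    have e2 : ∑ γ : {j // j ∈ T}, (-(pinv B ⟨j, hβ⟩ i * w γ)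
          + (x i - B.mulVec w i) * (Bᵀ * B)⁻¹ ⟨j, hβ⟩ γ) * h ↑γ
        = -(pinv B ⟨j, hβ⟩ i * S)
          + (x i - B.mulVec w i) * ∑ γ : {j // j ∈ T}, (Bᵀ * B)⁻¹ ⟨j, hβ⟩ γ * h ↑γ := by
      rw [hSdef, Finset.mul_sum, Finset.mul_sum, ← Finset.sum_neg_distrib,
        ← Finset.sum_add_distrib]
      apply Finset.sum_congr rfl
      intros; ring
    rw [e2]
    simp only [Pi.add_apply]
    have e1a : ∑ γ : {j // j ∈ T}, (Bᵀ * B)⁻¹ ⟨j, hβ⟩ γ * (h ↑γ * x i)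
        = x i * ∑ γ : {j // j ∈ T}, (Bᵀ * B)⁻¹ ⟨j, hβ⟩ γ * h ↑γ := by
      rw [Finset.mul_sum]
      apply Finset.sum_congr rfl
      intros; ring
    have e1b : ∑ γ : {j // j ∈ T}, (Bᵀ * B)⁻¹ ⟨j, hβ⟩ γ * (B i γ * S + h ↑γ * B.mulVec w i)
        = (∑ γ : {j // j ∈ T}, (Bᵀ * B)⁻¹ ⟨j, hβ⟩ γ * B i γ) * S
          + (B.mulVec w i) * ∑ γ : {j // j ∈ T}, (Bᵀ * B)⁻¹ ⟨j, hβ⟩ γ * h ↑γ := by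
      have : ∀ γ : {j // j ∈ T}, (Bᵀ * B)⁻¹ ⟨j, hβ⟩ γ * (B i γ * S + h ↑γ * B.mulVec w i)
          = (Bᵀ * B)⁻¹ ⟨j, hβ⟩ γ * (B i γ * S) + (Bᵀ * B)⁻¹ ⟨j, hβ⟩ γ * (h ↑γ * B.mulVec w i) :=
        fun γ => by ring
      rw [Finset.sum_congr rfl (fun γ _ => this γ), Finset.sum_add_distrib]
      congr 1
      · rw [Finset.sum_mul]
        apply Finset.sum_congr rfl
        intros; ring
      · rw [Finset.mul_sum]
        apply Finset.sum_congr rfl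
        intros; ring
    rw [e1a, e1b, hPsum]
    ring
  · have h0 : embedL T ((Bᵀ * B)⁻¹.mulVec ((colL i T h).mulVec x)
        + -((Bᵀ * B)⁻¹.mulVec ((fun γ : {j // j ∈ T} => B i γ * S)
          + fun α : {j // j ∈ T} => h ↑α * B.mulVec w i))) j = 0 := dif_neg hβ
    rw [h0]
    have : ∀ k, MspecB i T x B j k * h k = 0 := by
      intro k
      simp [MspecB, hβ]
    calc (0:ℝ) = ∑ k : Fin s, (0:ℝ) := by simp
      _ = ∑ k, MspecB i T x B j k * h k := Finset.sum_congr rfl (fun k _ => (this k).symm)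
      _ = (MspecB i T x B).mulVec h j := rfl

theorem hasFDerivAt_core
    (hGu : IsUnit ((A.submatrix id (Subtype.val : {j // j ∈ T} → Fin s))ᵀ *
      A.submatrix id (Subtype.val : {j // j ∈ T} → Fin s))) :
    HasFDerivAt
      (fun a : Fin s → ℝ =>
        embedL T ((Ring.inverse ((Bf A i T a)ᵀ * Bf A i T a)).mulVec ((Bf A i T a)ᵀ.mulVec x)))
      (Matrix.mulVecLin (Mspec A i T x)).toContinuousLinearMap (A i) := by
  classical
  have hdet : IsUnit (((A.submatrix id (Subtype.val : {j // j ∈ T} → Fin s))ᵀ *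
      A.submatrix id (Subtype.val : {j // j ∈ T} → Fin s)).det) :=
    (Matrix.isUnit_iff_isUnit_det _).mp hGu
  have hBm : HasFDerivAt (fun a => Bf A i T a)
      (LinearMap.toContinuousLinearMap (rowL i T)) (A i) := by
    have h1 := ((LinearMap.toContinuousLinearMap (rowL i T)).hasFDerivAt
      (x := A i)).add_const (Km A i T)
    exact h1
  have hBt : HasFDerivAt (fun a => (Bf A i T a)ᵀ)
      (LinearMap.toContinuousLinearMap (colL i T)) (A i) := by
    have h1 := ((LinearMap.toContinuousLinearMap (colL i T)).hasFDerivAt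
      (x := A i)).add_const ((Km A i T)ᵀ)
    have h2 : (fun a => (Bf A i T a)ᵀ) = fun a => colL i T a + (Km A i T)ᵀ :=
      funext (Bf_transpose A i T)
    rw [h2]
    exact h1
  have hG := (clm2 (matMulL (l := {j // j ∈ T}) (m := Fin r)
    (n := {j // j ∈ T}))).hasFDerivAt_of_bilinear hBt hBm
  have hu : IsUnit ((Bf A i T (A i))ᵀ * Bf A i T (A i)) := by
    rw [Bf_base]; exact hGu
  have h4 := hasFDerivAt_ringInverse (𝕜 := ℝ) hu.unit
  rw [IsUnit.unit_spec] at h4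
  have hInv := h4.comp (A i) hG
  have hc : HasFDerivAt (fun a => (Bf A i T a)ᵀ.mulVec x)
      (LinearMap.toContinuousLinearMap ((mvL x).comp (colL i T))) (A i) := by
    have h1 := ((LinearMap.toContinuousLinearMap ((mvL x).comp (colL i T))).hasFDerivAt
      (x := A i)).add_const ((Km A i T)ᵀ.mulVec x)
    have h2 : (fun a => (Bf A i T a)ᵀ.mulVec x)
        = fun a => ((mvL x).comp (colL i T)) a + (Km A i T)ᵀ.mulVec x := by
      funext a
      rw [Bf_transpose]
      simp [mvL, Matrix.add_mulVec]
    rw [h2]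
    simpa [LinearMap.coe_toContinuousLinearMap'] using h1
  have hmid := (clm2 (mulVecL (m := {j // j ∈ T}) (n := {j // j ∈ T}))).hasFDerivAt_of_bilinear
    hInv hc
  have hemb := ((embedL T).toContinuousLinearMap.hasFDerivAt).comp (A i) hmid
  refine HasFDerivAt.congr_fderiv hemb ?_
  apply ContinuousLinearMap.ext
  intro h
  simp only [ContinuousLinearMap.coe_comp', Function.comp_apply, ContinuousLinearMap.add_apply,
    ContinuousLinearMap.precompR_apply, ContinuousLinearMap.precompL_apply,
    ContinuousLinearMap.neg_apply, ContinuousLinearMap.comp_apply,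
    ContinuousLinearMap.mulLeftRight_apply, clm2_apply, LinearMap.mk₂_apply,
    LinearMap.coe_toContinuousLinearMap', LinearMap.coe_comp, Matrix.mulVecLin_apply,
    ContinuousLinearMap.compL_apply,
    matMulL, mulVecL, mvL, LinearMap.coe_mk, AddHom.coe_mk, Bf_base]
  rw [Matrix.coe_units_inv, IsUnit.unit_spec, ← Matrix.nonsing_inv_eq_ringInverse]
  rw [Mspec_eq]
  exact deriv_entry i T x (A.submatrix id (Subtype.val : {j // j ∈ T} → Fin s)) hdet h


end Deriv

/-- at a locally-constant-support pair `(A, x)`, the derivative of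
`q(A,x)` with respect to the `i`-th row of `A` has `(T × T)` block
`−(A_{:,T}†)_{:,i} (A_{:,T}† x)ᵀ + ((I − A_{:,T} A_{:,T}†) x)_i · A_{:,T}† (A_{:,T}†)ᵀ`
and vanishes outside `T × T`. -/
theorem nnls_deriv_in_A_row {r s : ℕ} (hrs : s ≤ r)
    (Q : (Fin r → Fin s → ℝ) → (Fin r → ℝ) → (Fin s → ℝ))
    (hQ : ∀ A x, (∀ i j, 0 ≤ A i j) → (∀ i, 0 ≤ x i) → (Matrix.of A).rank = s →
      IsNNLS (Matrix.of A) x (Q A x))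
    (A : Matrix (Fin r) (Fin s) ℝ) (hA0 : ∀ i j, 0 ≤ A i j) (hArank : A.rank = s)
    (x : Fin r → ℝ) (hx0 : ∀ i, 0 ≤ x i)
    (hU : ∃ N : Set ((Fin r → Fin s → ℝ) × (Fin r → ℝ)), IsOpen N ∧
      ((fun i j => A i j), x) ∈ N ∧
      ∀ p ∈ N, (∀ i j, 0 ≤ p.1 i j) → (∀ i, 0 ≤ p.2 i) → (Matrix.of p.1).rank = s →
        {j | 0 < Q p.1 p.2 j} = {j | 0 < Q (fun i j => A i j) x j})
    (T : Finset (Fin s))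
    (hT : T = Finset.univ.filter (fun j => 0 < Q (fun i j => A i j) x j))
    (AT : Matrix (Fin r) {j // j ∈ T} ℝ)
    (hAT : AT = A.submatrix id (Subtype.val : {j // j ∈ T} → Fin s))
    (i : Fin r)
    (M : Matrix (Fin s) (Fin s) ℝ)
    (hM : ∀ β α, M β α =
      if hβ : β ∈ T then
        if hα : α ∈ T then
          -(pinv AT ⟨β, hβ⟩ i * (pinv AT).mulVec x ⟨α, hα⟩) +
            (x i - (AT * pinv AT).mulVec x i) * (pinv AT * (pinv AT)ᵀ) ⟨β, hβ⟩ ⟨α, hα⟩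
        else 0
      else 0) :
    HasFDerivWithinAt
      (fun a : Fin s → ℝ => Q (fun i' j => if i' = i then a j else A i' j) x)
      (Matrix.mulVecLin M).toContinuousLinearMap {a : Fin s → ℝ | ∀ j, 0 ≤ a j} (A i) := by
  classical
  obtain ⟨N, hNopen, hNmem, hNsupp⟩ := hU
  have hMM : M = Mspec A i T x := by
    subst hAT
    ext β α
    rw [hM]
    rfl
  rw [hMM]
  have hAinj : Function.Injective A.mulVec := mulVec_inj_of_rank hArank
  have hATinj : Function.Injective
      ((A.submatrix id (Subtype.val : {j // j ∈ T} → Fin s))).mulVec := by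
    intro c d hcd
    rw [submatrix_mulVec_eq, submatrix_mulVec_eq] at hcd
    have := hAinj hcd
    funext α
    have h2 := congrFun this ↑α
    simpa [α.2] using h2
  have hGu : IsUnit ((A.submatrix id (Subtype.val : {j // j ∈ T} → Fin s))ᵀ *
      A.submatrix id (Subtype.val : {j // j ∈ T} → Fin s)) := isUnit_gram hATinj
  have hcore := hasFDerivAt_core A i T x hGu
  -- pointwise identification of the core function with the dite formula
  have hEy : ∀ (y : {j // j ∈ T} → ℝ) (j : Fin s),
      embedL T y j = if h : j ∈ T then y ⟨j, h⟩ else 0 := fun y j => rfl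
  have hcoreeq : ∀ a : Fin s → ℝ,
      embedL T ((Ring.inverse ((Bf A i T a)ᵀ * Bf A i T a)).mulVec ((Bf A i T a)ᵀ.mulVec x))
      = fun j => if h : j ∈ T then
          (pinv ((Matrix.of fun i' j' => if i' = i then a j' else A i' j').submatrix id
            (Subtype.val : {j // j ∈ T} → Fin s))).mulVec x ⟨j, h⟩
        else 0 := by
    intro a
    funext j
    rw [hEy, Bf_eq, ← Matrix.nonsing_inv_eq_ringInverse]
    by_cases hj : j ∈ T
    · rw [dif_pos hj, dif_pos hj, pinv, ← Matrix.mulVec_mulVec]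
    · rw [dif_neg hj, dif_neg hj]
  -- key : the NNLS solution agrees with the formula
  have key : ∀ a : Fin s → ℝ,
      (((fun i' j => if i' = i then a j else A i' j) : Fin r → Fin s → ℝ), x) ∈ N →
      ((Matrix.of fun i' j => if i' = i then a j else A i' j)ᵀ *
        Matrix.of fun i' j => if i' = i then a j else A i' j).det ≠ 0 →
      (∀ j, 0 ≤ a j) →
      Q (fun i' j => if i' = i then a j else A i' j) x
        = fun j => if h : j ∈ T then
            (pinv ((Matrix.of fun i' j' => if i' = i then a j' else A i' j').submatrix id
              (Subtype.val : {j // j ∈ T} → Fin s))).mulVec x ⟨j, h⟩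
          else 0 := by
    intro a hNa hdeta ha
    have hA'0 : ∀ i' j, 0 ≤ (Matrix.of fun i' j => if i' = i then a j else A i' j) i' j := by
      intro i' j
      by_cases hi : i' = i <;> simp [hi, ha j, hA0 i' j]
    have hrank : (Matrix.of fun i' j => if i' = i then a j else A i' j).rank = s := by
      have h1 : IsUnit ((Matrix.of fun i' j => if i' = i then a j else A i' j)ᵀ *
          Matrix.of fun i' j => if i' = i then a j else A i' j) :=
        (Matrix.isUnit_iff_isUnit_det _).mpr (isUnit_iff_ne_zero.mpr hdeta)
      have h2 := Matrix.rank_of_isUnit _ h1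
      rw [← Matrix.rank_transpose_mul_self, h2, Fintype.card_fin]
    have hnnls : IsNNLS (Matrix.of fun i' j => if i' = i then a j else A i' j) x
        (Q (fun i' j => if i' = i then a j else A i' j) x) :=
      hQ _ x hA'0 hx0 hrank
    have hsupp : ∀ j, 0 < Q (fun i' j => if i' = i then a j else A i' j) x j ↔ j ∈ T := by
      intro j
      have hs := hNsupp _ hNa hA'0 hx0 hrank
      have h3 := Set.ext_iff.mp hs j
      simp only [Set.mem_setOf_eq] at h3
      rw [hT]
      simp only [Finset.mem_filter, Finset.mem_univ, true_and]
      exact h3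
    exact nnls_formula hnnls T hsupp hrank
  -- the modified matrix at the base point is A itself
  have hbasefun : ((fun i' j => if i' = i then A i j else A i' j) : Fin r → Fin s → ℝ)
      = fun i' j => A i' j := by
    funext i' j
    by_cases hi : i' = i <;> simp [hi]
  have hbase : (Matrix.of fun i' j => if i' = i then A i j else A i' j) = A := by
    ext i' j
    by_cases hi : i' = i <;> simp [hi]
  have hdet0 : ((Matrix.of fun i' j => if i' = i then A i j else A i' j)ᵀ *
      Matrix.of fun i' j => if i' = i then A i j else A i' j).det ≠ 0 := by
    rw [hbase]
    exact ((Matrix.isUnit_iff_isUnit_det _).mp (isUnit_gram hAinj)).ne_zero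
  -- open neighbourhood
  have hφ : Continuous (fun a : Fin s → ℝ =>
      (((fun i' j => if i' = i then a j else A i' j) : Fin r → Fin s → ℝ), x)) := by
    refine Continuous.prodMk ?_ continuous_const
    refine continuous_pi fun i' => continuous_pi fun j => ?_
    by_cases hi : i' = i
    · simpa [hi] using continuous_apply j
    · simpa [hi] using (continuous_const : Continuous fun _ : Fin s → ℝ => A i' j)
  have hdetc : Continuous (fun a : Fin s → ℝ =>
      ((Matrix.of fun i' j => if i' = i then a j else A i' j)ᵀ *
        Matrix.of fun i' j => if i' = i then a j else A i' j).det) := by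
    have hm : Continuous (fun a : Fin s → ℝ =>
        (Matrix.of fun i' j => if i' = i then a j else A i' j : Matrix (Fin r) (Fin s) ℝ)) := by
      refine continuous_matrix fun i' j => ?_
      by_cases hi : i' = i
      · simpa [hi] using continuous_apply j
      · simpa [hi] using (continuous_const : Continuous fun _ : Fin s → ℝ => A i' j)
    exact (hm.matrix_transpose.matrix_mul hm).matrix_det
  set V : Set (Fin s → ℝ) :=
    ((fun a : Fin s → ℝ =>
      (((fun i' j => if i' = i then a j else A i' j) : Fin r → Fin s → ℝ), x)) ⁻¹' N)
    ∩ ((fun a : Fin s → ℝ =>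
        ((Matrix.of fun i' j => if i' = i then a j else A i' j)ᵀ *
          Matrix.of fun i' j => if i' = i then a j else A i' j).det) ⁻¹' {(0:ℝ)}ᶜ) with hV
  have hVopen : IsOpen V := (hNopen.preimage hφ).inter (isOpen_compl_singleton.preimage hdetc)
  have hAiV : A i ∈ V := by
    constructor
    · show (((fun i' j => if i' = i then (A i) j else A i' j) : Fin r → Fin s → ℝ), x) ∈ N
      rw [hbasefun]
      exact hNmem
    · exact hdet0
  have hmemV : V ∈ nhdsWithin (A i) {a : Fin s → ℝ | ∀ j, 0 ≤ a j} :=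
    mem_nhdsWithin_of_mem_nhds (hVopen.mem_nhds hAiV)
  refine (hcore.hasFDerivWithinAt).congr_of_eventuallyEq ?_ ?_
  · filter_upwards [hmemV, self_mem_nhdsWithin] with a haV haS
    exact (key a haV.1 haV.2 haS).trans (hcoreeq a).symm
  · exact (key (A i) hAiV.1 hAiV.2 (hA0 i)).trans (hcoreeq (A i)).symm
end

section
/- For fixed index set T ⊆ {1,…,s} and index i ∈ T, the map f(A, x) = (A_{:,T}† x)_{T(i)} defined on pairs (A,x) with A ∈ ℝ^{r×s} of full column rank has a surjective (full row rank) total derivative at every point; consequently the preimage under f of any Lebesgue-null subset of ℝ has Lebesgue measure zero. -/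
open Matrix MeasureTheory

attribute [local instance] Matrix.linftyOpNormedAddCommGroup Matrix.linftyOpNormedSpace
  Matrix.linftyOpNormedRing Matrix.linftyOpNormedAlgebra

private lemma inj_of_rank_s13 {r s : ℕ} (A : Matrix (Fin r) (Fin s) ℝ) (hA : A.rank = s) :
    ∀ v, A *ᵥ v = 0 → v = 0 := by
  intro v hv
  have h2 := LinearMap.finrank_range_add_finrank_ker A.mulVecLin
  rw [Module.finrank_pi, Fintype.card_fin] at h2
  have h1 : Module.finrank ℝ (LinearMap.range A.mulVecLin) = s := hA
  have hker : Module.finrank ℝ (LinearMap.ker A.mulVecLin) = 0 := by omega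
  have hbot : LinearMap.ker A.mulVecLin = ⊥ := Submodule.finrank_eq_zero.1 hker
  have : v ∈ LinearMap.ker A.mulVecLin := by
    simp [LinearMap.mem_ker, Matrix.mulVecLin_apply, hv]
  rw [hbot] at this
  simpa using this

private lemma det_ne {r : ℕ} {n : Type*} [Fintype n] [DecidableEq n] (M : Matrix (Fin r) n ℝ)
    (hM : ∀ v, M *ᵥ v = 0 → v = 0) : (Mᵀ * M).det ≠ 0 := by
  intro h
  obtain ⟨v, hv, hv0⟩ := (Matrix.exists_mulVec_eq_zero_iff).2 h
  apply hv
  apply hM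
  have hv' : v ∈ LinearMap.ker (Mᵀ * M).mulVecLin := LinearMap.mem_ker.2 (by
    rw [Matrix.mulVecLin_apply]; exact hv0)
  rw [Matrix.ker_mulVecLin_transpose_mul_self] at hv'
  have := LinearMap.mem_ker.1 hv'
  rwa [Matrix.mulVecLin_apply] at this

private def Msub {r s : ℕ} (T : Finset (Fin s)) (A : Fin r → Fin s → ℝ) :
    Matrix (Fin r) {j // j ∈ T} ℝ :=
  (Matrix.of A).submatrix id (Subtype.val : {j // j ∈ T} → Fin s)

private lemma Msub_mulVec {r s : ℕ} (T : Finset (Fin s)) (A : Fin r → Fin s → ℝ)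
    (v : {j // j ∈ T} → ℝ) :
    Msub T A *ᵥ v = Matrix.of A *ᵥ (fun j => if h : j ∈ T then v ⟨j, h⟩ else 0) := by
  funext k
  simp only [Msub, Matrix.mulVec, dotProduct, Matrix.submatrix_apply, id_eq]
  rw [← Finset.sum_subset T.subset_univ (fun j _ hj => by simp [hj])]
  rw [Finset.sum_subtype T (fun j => Iff.rfl)
    (fun j => Matrix.of A k j * (if h : j ∈ T then v ⟨j, h⟩ else 0))]
  apply Finset.sum_congr rfl
  intro j _
  simp

private lemma ker_Msub {r s : ℕ} (T : Finset (Fin s)) {A : Fin r → Fin s → ℝ}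
    (hA : (Matrix.of A).rank = s) : ∀ v, Msub T A *ᵥ v = 0 → v = 0 := by
  intro v hv
  rw [Msub_mulVec] at hv
  have := inj_of_rank_s13 (Matrix.of A) hA _ hv
  funext j
  have hj := congrFun this j.val
  simpa [j.2] using hj

private lemma isUnit_G {r s : ℕ} (T : Finset (Fin s)) {A : Fin r → Fin s → ℝ}
    (hA : (Matrix.of A).rank = s) : IsUnit ((Msub T A)ᵀ * Msub T A) :=
  (Matrix.isUnit_iff_isUnit_det _).2 (isUnit_iff_ne_zero.2 (det_ne _ (ker_Msub T hA)))

private lemma rank_iff_det {r s : ℕ} (A : Fin r → Fin s → ℝ) :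
    (Matrix.of A).rank = s ↔ ((Matrix.of A)ᵀ * Matrix.of A).det ≠ 0 := by
  constructor
  · intro h
    exact det_ne _ (inj_of_rank_s13 _ h)
  · intro h
    have h1 : ((Matrix.of A)ᵀ * Matrix.of A).rank = s := by
      rw [Matrix.rank_of_isUnit _ ((Matrix.isUnit_iff_isUnit_det _).2 (isUnit_iff_ne_zero.2 h))]
      simp
    rw [← Matrix.rank_transpose_mul_self]
    exact h1

private lemma pinv_mul {m n : Type*} [Fintype m] [Fintype n] [DecidableEq n]
    (A : Matrix m n ℝ) (h : IsUnit (Aᵀ * A)) : pinv A * A = 1 := by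
  unfold pinv
  rw [Matrix.mul_assoc]
  exact Matrix.nonsing_inv_mul _ ((Matrix.isUnit_iff_isUnit_det _).1 h)

private lemma null_preimage_dot {r : ℕ} {c : Fin r → ℝ} {k0 : Fin r} (hk0 : c k0 ≠ 0)
    {Z : Set ℝ} (hZ : volume Z = 0) :
    volume {x : Fin r → ℝ | c ⬝ᵥ x ∈ Z} = 0 := by
  set M : Matrix (Fin r) (Fin r) ℝ := (1 : Matrix (Fin r) (Fin r) ℝ).updateRow k0 c with hM
  have hdet : M.det = c k0 := by
    have hc : c = ∑ k, c k • (1 : Matrix (Fin r) (Fin r) ℝ) k := by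
      funext l
      simp [Matrix.one_apply, Finset.sum_ite_eq]
    rw [hM]
    conv_lhs => rw [hc]
    rw [Matrix.det_updateRow_sum]
    simp
  have hΦ : LinearMap.det (Matrix.toLin' M) ≠ 0 := by
    rw [LinearMap.det_toLin', hdet]; exact hk0
  have h1 : {x : Fin r → ℝ | c ⬝ᵥ x ∈ Z} = (Matrix.toLin' M) ⁻¹' {y | y k0 ∈ Z} := by
    ext x
    simp only [Set.mem_setOf_eq, Set.mem_preimage, Matrix.toLin'_apply]
    have : (M *ᵥ x) k0 = c ⬝ᵥ x := by
      rw [hM]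
      show Matrix.updateRow 1 k0 c k0 ⬝ᵥ x = c ⬝ᵥ x
      rw [Matrix.updateRow_self]
    rw [this]
  have h2 : volume {y : Fin r → ℝ | y k0 ∈ Z} = 0 := by
    have he : {y : Fin r → ℝ | y k0 ∈ Z} =
        Set.pi Set.univ (fun k => if k = k0 then Z else Set.univ) := by
      ext y
      simp only [Set.mem_setOf_eq, Set.mem_pi, Set.mem_univ, forall_true_left]
      constructor
      · intro h k
        by_cases hk : k = k0 <;> simp [hk, h]
      · intro h
        have := h k0
        simpa using this
    rw [he, volume_pi_pi]
    exact Finset.prod_eq_zero (Finset.mem_univ k0) (by simp [hZ])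
  rw [h1, Measure.addHaar_preimage_linearMap volume hΦ]
  rw [h2, mul_zero]

private noncomputable def matCLE (n : Type*) [Fintype n] [DecidableEq n] :
    ((n → n → ℝ) ≃L[ℝ] Matrix n n ℝ) :=
  LinearEquiv.toContinuousLinearEquiv
    { toFun := fun M => Matrix.of M
      invFun := fun M => Matrix.of.symm M
      map_add' := fun _ _ => rfl
      map_smul' := fun _ _ => rfl
      left_inv := fun _ => rfl
      right_inv := fun _ => rfl }

/-- `f(A,x) = (A_{:,T}† x)_{T(i)}` has a surjective total derivative at
every full-column-rank point; consequently preimages of Lebesgue-null subsets of `ℝ`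
(within the full-rank set) are null. -/
theorem submersion_preimage_null {r s : ℕ} (hrs : s ≤ r)
    (T : Finset (Fin s)) (i : Fin s) (hi : i ∈ T)
    (f : (Fin r → Fin s → ℝ) × (Fin r → ℝ) → ℝ)
    (hf : ∀ p, f p =
      (pinv ((Matrix.of p.1).submatrix id
        (Subtype.val : {j // j ∈ T} → Fin s))).mulVec p.2 ⟨i, hi⟩) :
    (∀ p : (Fin r → Fin s → ℝ) × (Fin r → ℝ), (Matrix.of p.1).rank = s →
      ∃ L : ((Fin r → Fin s → ℝ) × (Fin r → ℝ)) →L[ℝ] ℝ,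
        HasFDerivAt f L p ∧ Function.Surjective L) ∧
    ∀ Z : Set ℝ, volume Z = 0 →
      volume (f ⁻¹' Z ∩ {p | (Matrix.of p.1).rank = s}) = 0 := by
  -- abbreviation
  have hf' : ∀ p : (Fin r → Fin s → ℝ) × (Fin r → ℝ),
      f p = (pinv (Msub T p.1)).mulVec p.2 ⟨i, hi⟩ := hf
  -- the explicit scalar formula for `f` in terms of `Ring.inverse`
  have hfe : ∀ p : (Fin r → Fin s → ℝ) × (Fin r → ℝ),
      f p = ∑ j : {j // j ∈ T}, Ring.inverse ((Msub T p.1)ᵀ * Msub T p.1) ⟨i, hi⟩ j *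
        (∑ k, p.1 k (j : Fin s) * p.2 k) := by
    intro p
    rw [hf' p]
    unfold pinv
    rw [Matrix.nonsing_inv_eq_ringInverse, ← Matrix.mulVec_mulVec]
    show (fun b => Ring.inverse ((Msub T p.1)ᵀ * Msub T p.1) ⟨i, hi⟩ b) ⬝ᵥ
      ((Msub T p.1)ᵀ *ᵥ p.2) = _
    simp only [dotProduct, Matrix.mulVec, Matrix.transpose_apply, Msub,
      Matrix.submatrix_apply, id_eq, Matrix.of_apply]
  constructor
  · -- Part 1 : differentiability & surjectivity of the derivative
    intro p hp
    have hu : IsUnit ((Msub T p.1)ᵀ * Msub T p.1) := isUnit_G T hp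
    -- differentiability
    have hdiff : DifferentiableAt ℝ f p := by
      have hfeq : f = fun p : (Fin r → Fin s → ℝ) × (Fin r → ℝ) =>
          ∑ j : {j // j ∈ T}, Ring.inverse ((Msub T p.1)ᵀ * Msub T p.1) ⟨i, hi⟩ j *
            (∑ k, p.1 k (j : Fin s) * p.2 k) := funext hfe
      rw [hfeq]
      have hcoord1 : ∀ (k : Fin r) (j : Fin s),
          DifferentiableAt ℝ (fun p : (Fin r → Fin s → ℝ) × (Fin r → ℝ) => p.1 k j) p := by
        intro k j; fun_prop
      have hcoord2 : ∀ (k : Fin r),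
          DifferentiableAt ℝ (fun p : (Fin r → Fin s → ℝ) × (Fin r → ℝ) => p.2 k) p := by
        intro k; fun_prop
      have hg0 : DifferentiableAt ℝ (fun p : (Fin r → Fin s → ℝ) × (Fin r → ℝ) =>
          (fun a b : {j // j ∈ T} => ∑ k, p.1 k (a : Fin s) * p.1 k (b : Fin s))) p := by
        rw [differentiableAt_pi]
        intro a
        rw [differentiableAt_pi]
        intro b
        exact DifferentiableAt.fun_sum fun k _ => (hcoord1 k a).mul (hcoord1 k b)
      have hgeq : (fun p : (Fin r → Fin s → ℝ) × (Fin r → ℝ) => (Msub T p.1)ᵀ * Msub T p.1) =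
          fun p => matCLE {j // j ∈ T}
            (fun a b : {j // j ∈ T} => ∑ k, p.1 k (a : Fin s) * p.1 k (b : Fin s)) := by
        funext q
        ext a b
        simp [matCLE, Matrix.mul_apply, Msub, LinearEquiv.toContinuousLinearEquiv]
        rfl
      have hg : DifferentiableAt ℝ
          (fun p : (Fin r → Fin s → ℝ) × (Fin r → ℝ) => (Msub T p.1)ᵀ * Msub T p.1) p := by
        rw [hgeq]
        exact ((matCLE {j // j ∈ T}).differentiableAt).comp p hg0
      have hinv : DifferentiableAt ℝ (fun p : (Fin r → Fin s → ℝ) × (Fin r → ℝ) =>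
          Ring.inverse ((Msub T p.1)ᵀ * Msub T p.1)) p := hg.inverse hu
      have hinv' : DifferentiableAt ℝ (fun p : (Fin r → Fin s → ℝ) × (Fin r → ℝ) =>
          (matCLE {j // j ∈ T}).symm (Ring.inverse ((Msub T p.1)ᵀ * Msub T p.1))) p :=
        ((matCLE {j // j ∈ T}).symm.differentiableAt).comp p hinv
      have hentry : ∀ b : {j // j ∈ T}, DifferentiableAt ℝ
          (fun p : (Fin r → Fin s → ℝ) × (Fin r → ℝ) =>
            Ring.inverse ((Msub T p.1)ᵀ * Msub T p.1) ⟨i, hi⟩ b) p := by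
        intro b
        exact differentiableAt_pi.1 (differentiableAt_pi.1 hinv' ⟨i, hi⟩) b
      exact DifferentiableAt.fun_sum fun j _ =>
        (hentry j).mul (DifferentiableAt.fun_sum fun k _ => (hcoord1 k j).mul (hcoord2 k))
    refine ⟨fderiv ℝ f p, hdiff.hasFDerivAt, ?_⟩
    -- surjectivity of the derivative
    set c : Fin r → ℝ := fun k => pinv (Msub T p.1) ⟨i, hi⟩ k with hc
    -- the continuous linear functional `v ↦ c ⬝ᵥ v`
    set ℓ : (Fin r → ℝ) →L[ℝ] ℝ := LinearMap.toContinuousLinearMap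
      { toFun := fun v => c ⬝ᵥ v
        map_add' := fun u v => dotProduct_add c u v
        map_smul' := fun a v => dotProduct_smul a c v } with hℓ
    have hℓapp : ∀ v, ℓ v = c ⬝ᵥ v := fun v => rfl
    -- derivative of the affine slice
    set J : (Fin r → ℝ) →L[ℝ] (Fin r → Fin s → ℝ) × (Fin r → ℝ) :=
      (0 : (Fin r → ℝ) →L[ℝ] (Fin r → Fin s → ℝ)).prod (ContinuousLinearMap.id ℝ (Fin r → ℝ))
      with hJ
    have hJapp : ∀ v, J v = (0, v) := fun v => rfl
    have hface : HasFDerivAt (fun v : Fin r → ℝ => ((p.1, p.2 + v) :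
        (Fin r → Fin s → ℝ) × (Fin r → ℝ))) J 0 := by
      apply HasFDerivAt.prodMk
      · exact hasFDerivAt_const p.1 0
      · exact (hasFDerivAt_id (0 : Fin r → ℝ)).const_add p.2
    have hcomp : HasFDerivAt (fun v : Fin r → ℝ => f (p.1, p.2 + v))
        ((fderiv ℝ f p).comp J) 0 := by
      have h0 : ((p.1, p.2 + (0 : Fin r → ℝ)) : (Fin r → Fin s → ℝ) × (Fin r → ℝ)) = p := by
        simp
      exact HasFDerivAt.comp 0
        (show HasFDerivAt f (fderiv ℝ f p) ((p.1, p.2 + (0 : Fin r → ℝ)) :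
          (Fin r → Fin s → ℝ) × (Fin r → ℝ)) by rw [h0]; exact hdiff.hasFDerivAt) hface
    have haff : HasFDerivAt (fun v : Fin r → ℝ => f (p.1, p.2 + v)) ℓ 0 := by
      have heq : (fun v : Fin r → ℝ => f (p.1, p.2 + v)) = fun v => f p + ℓ v := by
        funext v
        rw [hf' (p.1, p.2 + v), hf' p]
        show (pinv (Msub T p.1) *ᵥ (p.2 + v)) ⟨i, hi⟩ = _
        rw [Matrix.mulVec_add]
        rfl
      rw [heq]
      exact ℓ.hasFDerivAt.const_add (f p)
    have huniq : (fderiv ℝ f p).comp J = ℓ := hcomp.unique haff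
    -- the column of `Msub` at index `⟨i, hi⟩` gives `c ⬝ᵥ v₀ = 1`
    set v0 : Fin r → ℝ := fun k => Msub T p.1 k ⟨i, hi⟩ with hv0
    have hcv : c ⬝ᵥ v0 = 1 := by
      have h1 : c ⬝ᵥ v0 = (pinv (Msub T p.1) * Msub T p.1) ⟨i, hi⟩ ⟨i, hi⟩ := by
        rw [Matrix.mul_apply]
        rfl
      rw [h1, pinv_mul _ hu, Matrix.one_apply_eq]
    intro y
    refine ⟨((0 : Fin r → Fin s → ℝ), y • v0), ?_⟩
    have h1 : (((0 : Fin r → Fin s → ℝ), y • v0) :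
        (Fin r → Fin s → ℝ) × (Fin r → ℝ)) = J (y • v0) := by
      rw [hJapp]
    rw [h1, ← ContinuousLinearMap.comp_apply, huniq, hℓapp, dotProduct_smul, hcv,
      smul_eq_mul, mul_one]
  · -- Part 2 : preimages of null sets are null
    intro Z hZ
    set Z' := toMeasurable volume Z with hZ'def
    have hZ'm : MeasurableSet Z' := measurableSet_toMeasurable _ _
    have hZ'0 : volume Z' = 0 := by rw [hZ'def, measure_toMeasurable]; exact hZ
    set D : Set ((Fin r → Fin s → ℝ) × (Fin r → ℝ)) :=
      {p | ((Matrix.of p.1)ᵀ * Matrix.of p.1).det ≠ 0} with hD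
    have hsub : f ⁻¹' Z ∩ {p | (Matrix.of p.1).rank = s} ⊆ f ⁻¹' Z' ∩ D := by
      apply Set.inter_subset_inter
      · exact Set.preimage_mono (subset_toMeasurable _ _)
      · intro p hp
        exact (rank_iff_det p.1).1 hp
    apply measure_mono_null hsub
    -- measurability of f
    have hMcont : Continuous fun p : (Fin r → Fin s → ℝ) × (Fin r → ℝ) => Msub T p.1 := by
      apply continuous_matrix
      intro a b
      exact (continuous_apply (b : Fin s)).comp ((continuous_apply a).comp continuous_fst)
    have hGcont : Continuous fun p : (Fin r → Fin s → ℝ) × (Fin r → ℝ) =>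
        (Msub T p.1)ᵀ * Msub T p.1 := (hMcont.matrix_transpose).matrix_mul hMcont
    have hfm : Measurable f := by
      have hfeq : f = fun p : (Fin r → Fin s → ℝ) × (Fin r → ℝ) =>
          ∑ j : {j // j ∈ T}, (((Msub T p.1)ᵀ * Msub T p.1).det⁻¹ *
              ((Msub T p.1)ᵀ * Msub T p.1).adjugate ⟨i, hi⟩ j) *
            (∑ k, p.1 k (j : Fin s) * p.2 k) := by
        funext p
        rw [hfe p]
        apply Finset.sum_congr rfl
        intro j _
        congr 1
        rw [← Matrix.nonsing_inv_eq_ringInverse, Matrix.inv_def, Matrix.smul_apply,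
          Ring.inverse_eq_inv, smul_eq_mul]
      rw [hfeq]
      apply Finset.measurable_sum
      intro j _
      apply Measurable.mul
      · apply Measurable.mul
        · exact (hGcont.matrix_det.measurable).inv
        · exact ((hGcont.matrix_adjugate).matrix_elem ⟨i, hi⟩ j).measurable
      · apply Finset.measurable_sum
        intro k _
        show Measurable fun p : (Fin r → Fin s → ℝ) × (Fin r → ℝ) => p.1 k (j : Fin s) * p.2 k
        fun_prop
    have hDm : MeasurableSet D := by
      have hcont : Continuous fun p : (Fin r → Fin s → ℝ) × (Fin r → ℝ) =>
          ((Matrix.of p.1)ᵀ * Matrix.of p.1).det := by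
        have : Continuous fun p : (Fin r → Fin s → ℝ) × (Fin r → ℝ) => Matrix.of p.1 := by
          apply continuous_matrix
          intro a b
          exact (continuous_apply b).comp ((continuous_apply a).comp continuous_fst)
        exact ((this.matrix_transpose).matrix_mul this).matrix_det
      exact (hcont.measurable (measurableSet_singleton 0)).compl
    have hSm : MeasurableSet (f ⁻¹' Z' ∩ D) := (hfm hZ'm).inter hDm
    rw [Measure.volume_eq_prod, Measure.measure_prod_null hSm]
    apply Filter.Eventually.of_forall
    intro A
    show volume (Prod.mk A ⁻¹' (f ⁻¹' Z' ∩ D)) = 0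
    by_cases hA : ((Matrix.of A)ᵀ * Matrix.of A).det ≠ 0
    · have hrank : (Matrix.of A).rank = s := (rank_iff_det A).2 hA
      have hu : IsUnit ((Msub T A)ᵀ * Msub T A) := isUnit_G T hrank
      set c : Fin r → ℝ := fun k => pinv (Msub T A) ⟨i, hi⟩ k with hc
      have hsubset : Prod.mk A ⁻¹' (f ⁻¹' Z' ∩ D) ⊆ {x : Fin r → ℝ | c ⬝ᵥ x ∈ Z'} := by
        intro x hx
        have h1 : f (A, x) ∈ Z' := hx.1
        have h2 : f (A, x) = c ⬝ᵥ x := by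
          rw [hf' (A, x)]
          rfl
        rwa [h2] at h1
      apply measure_mono_null hsubset
      have hcv : c ⬝ᵥ (fun k => Msub T A k ⟨i, hi⟩) = 1 := by
        have h1 : c ⬝ᵥ (fun k => Msub T A k ⟨i, hi⟩) =
            (pinv (Msub T A) * Msub T A) ⟨i, hi⟩ ⟨i, hi⟩ := by
          rw [Matrix.mul_apply]
          rfl
        rw [h1, pinv_mul _ hu, Matrix.one_apply_eq]
      have hck : ∃ k0, c k0 ≠ 0 := by
        by_contra h
        push_neg at h
        have : c ⬝ᵥ (fun k => Msub T A k ⟨i, hi⟩) = 0 := by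
          simp [dotProduct, h]
        rw [hcv] at this
        exact one_ne_zero this
      obtain ⟨k0, hk0⟩ := hck
      exact null_preimage_dot hk0 hZ'0
    · push_neg at hA
      have hempty : Prod.mk A ⁻¹' (f ⁻¹' Z' ∩ D) = ∅ := by
        ext x
        simp only [Set.mem_preimage, Set.mem_inter_iff, Set.mem_empty_iff_false, iff_false,
          not_and]
        intro _
        simp [hD, hA]
      rw [hempty]
      exact measure_empty
end
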